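/- arXiv:2111.00838 — 4 statements merged into one kernel-verified Lean document; each statement's English description precedes it below -/
import Mathlib

section
/- Let n = m ≥ 2 and let λ, μ ∈ 𝕂 with λμ ≠ 0. The odd bilinear form ω on the filiform Lie superalgebra L^{n,n} determined (together with anti-symmetry, i.e. ω(Y_j,X_i) = -ω(X_i,Y_j)) by ω(X₁,Y_n) = λ, ω(X_i,Y_{n+1−i}) = (−1)^{n−i} μ for 2 ≤ i ≤ n, and ω = 0 on all other pairs of basis vectors, is a closed anti-symmetric non-degenerate odd (periplectic) form; hence (L^{n,n}, ω) is a periplectic quasi-Frobenius Lie superalgebra. -/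
noncomputable section

/-- The sign `(−1)^{ij}` for parities `i, j` encoded as booleans
(`false` = even, `true` = odd). -/
def ssign (K : Type*) [Field K] (i j : Bool) : K := if i && j then -1 else 1

section Defs

variable (K : Type*) [Field K]

/-- A map `f : V → V → W` is bilinear over `K`. -/
def IsBilinMap (V W : Type*) [AddCommGroup V] [Module K V] [AddCommGroup W] [Module K W]
    (f : V → V → W) : Prop :=
  (∀ x y z : V, f (x + y) z = f x z + f y z) ∧
  (∀ (c : K) (x y : V), f (c • x) y = c • f x y) ∧
  (∀ x y z : V, f x (y + z) = f x y + f x z) ∧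
  (∀ (c : K) (x y : V), f x (c • y) = c • f x y)

variable (V : Type*) [AddCommGroup V] [Module K V]

/-- A Lie superalgebra structure over `K` on the `ℤ/2`-graded space `V`,
with homogeneous components `sub false` (even part) and `sub true` (odd part),
and bracket `br`.  Includes super anti-commutativity, the super Jacobi identity,
and (when `char K = 3`) the extra cubic condition on odd elements. -/
structure IsLieSuperAlg (sub : Bool → Submodule K V) (br : V → V → V) : Prop where
  compl : IsCompl (sub false) (sub true)
  bilin : IsBilinMap K V V br
  graded : ∀ i j : Bool, ∀ x ∈ sub i, ∀ y ∈ sub j, br x y ∈ sub (Bool.xor i j)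
  antisymm : ∀ i j : Bool, ∀ x ∈ sub i, ∀ y ∈ sub j, br y x = -(ssign K i j • br x y)
  jacobi : ∀ i j k : Bool, ∀ x ∈ sub i, ∀ y ∈ sub j, ∀ z ∈ sub k,
    ssign K i k • br x (br y z) + ssign K j i • br y (br z x) + ssign K k j • br z (br x y) = 0
  jacobi3 : ringChar K = 3 → ∀ f ∈ sub true, br f (br f f) = 0

/-- Graded anti-symmetry of a bilinear form: `ω(y,x) = -(-1)^{p(x)p(y)} ω(x,y)`. -/
def IsSuperSkew (sub : Bool → Submodule K V) (ω : V → V → K) : Prop :=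
  ∀ i j : Bool, ∀ x ∈ sub i, ∀ y ∈ sub j, ω y x = -(ssign K i j * ω x y)

/-- Closedness (2-cocycle condition) of a bilinear form with respect to a bracket. -/
def IsClosedForm (sub : Bool → Submodule K V) (br : V → V → V) (ω : V → V → K) : Prop :=
  ∀ i j k : Bool, ∀ x ∈ sub i, ∀ y ∈ sub j, ∀ z ∈ sub k,
    ssign K i k * ω x (br y z) + ssign K k j * ω z (br x y) + ssign K j i * ω y (br z x) = 0

/-- Non-degeneracy of a bilinear form. -/
def IsNondegForm (ω : V → V → K) : Prop := ∀ x : V, (∀ y : V, ω x y = 0) → x = 0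

/-- A bilinear form is even if it vanishes on pairs of homogeneous elements
of opposite parity. -/
def IsEvenForm (sub : Bool → Submodule K V) (ω : V → V → K) : Prop :=
  ∀ x y : V, (x ∈ sub false ∧ y ∈ sub true) ∨ (x ∈ sub true ∧ y ∈ sub false) → ω x y = 0

/-- A bilinear form is odd if it vanishes on pairs of homogeneous elements
of the same parity. -/
def IsOddForm (sub : Bool → Submodule K V) (ω : V → V → K) : Prop :=
  ∀ i : Bool, ∀ x ∈ sub i, ∀ y ∈ sub i, ω x y = 0

/-- `(𝔤, ω)` is quasi-Frobenius: `ω` is a closed anti-symmetric non-degenerate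
bilinear form. -/
def IsQuasiFrobenius (sub : Bool → Submodule K V) (br : V → V → V) (ω : V → V → K) : Prop :=
  IsBilinMap K V K ω ∧ IsSuperSkew K V sub ω ∧ IsClosedForm K V sub br ω ∧ IsNondegForm K V ω

end Defs


section Helpers

variable {K V W : Type*} [Field K] [AddCommGroup V] [Module K V]
  [AddCommGroup W] [Module K W]

lemma bilin_span_zero {f : V → V → W}
    (h1 : ∀ x y z : V, f (x + y) z = f x z + f y z)
    (h2 : ∀ (c : K) (x y : V), f (c • x) y = c • f x y)
    (h3 : ∀ x y z : V, f x (y + z) = f x y + f x z)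
    (h4 : ∀ (c : K) (x y : V), f x (c • y) = c • f x y)
    {s t : Set V} (h : ∀ x ∈ s, ∀ y ∈ t, f x y = 0) :
    ∀ x ∈ Submodule.span K s, ∀ y ∈ Submodule.span K t, f x y = 0 := by
  have z2 : ∀ x, f x 0 = 0 := fun x => by
    have := h4 (0 : K) x 0; simpa using this
  have inner : ∀ x ∈ s, ∀ y ∈ Submodule.span K t, f x y = 0 := by
    intro x hx y hy
    induction hy using Submodule.span_induction with
    | mem a ha => exact h x hx a ha
    | zero => exact z2 x
    | add a b _ _ ha hb => rw [h3, ha, hb, add_zero]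
    | smul c a _ ha => rw [h4, ha, smul_zero]
  intro x hx y hy
  induction hx using Submodule.span_induction with
  | mem a ha => exact inner a ha y hy
  | zero => have := h2 (0 : K) 0 y; simpa using this
  | add a b _ _ ha hb => rw [h1, ha, hb, add_zero]
  | smul c a _ ha => rw [h2, ha, smul_zero]

lemma trilin_span_zero {f : V → V → V → W}
    (ha1 : ∀ x x' y z : V, f (x + x') y z = f x y z + f x' y z)
    (hs1 : ∀ (c : K) (x y z : V), f (c • x) y z = c • f x y z)
    (ha2 : ∀ x y y' z : V, f x (y + y') z = f x y z + f x y' z)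
    (hs2 : ∀ (c : K) (x y z : V), f x (c • y) z = c • f x y z)
    (ha3 : ∀ x y z z' : V, f x y (z + z') = f x y z + f x y z')
    (hs3 : ∀ (c : K) (x y z : V), f x y (c • z) = c • f x y z)
    {s t u : Set V} (h : ∀ x ∈ s, ∀ y ∈ t, ∀ z ∈ u, f x y z = 0) :
    ∀ x ∈ Submodule.span K s, ∀ y ∈ Submodule.span K t, ∀ z ∈ Submodule.span K u,
      f x y z = 0 := by
  have step : ∀ x ∈ s, ∀ y ∈ Submodule.span K t, ∀ z ∈ Submodule.span K u,
      f x y z = 0 := by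
    intro x hx
    exact bilin_span_zero (fun a b c => ha2 x a b c) (fun c a b => hs2 c x a b)
      (fun a b c => ha3 x a b c) (fun c a b => hs3 c x a b) (h x hx)
  intro x hx y hy z hz
  induction hx using Submodule.span_induction with
  | mem a ha => exact step a ha y hy z hz
  | zero => have := hs1 (0 : K) 0 y z; simpa using this
  | add a b _ _ ha hb => rw [ha1, ha, hb, add_zero]
  | smul c a _ ha => rw [hs1, ha, smul_zero]

end Helpers

/-- On the filiform Lie superalgebra `L^{n,n}` (with even basis
`X₁,…,Xₙ` and odd basis `Y₁,…,Yₙ`), the odd form determined by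
`ω(X₁,Yₙ) = λ`, `ω(X_i, Y_{n+1-i}) = (−1)^{n−i} μ` for `2 ≤ i ≤ n` (with `λμ ≠ 0`),
anti-symmetry, and `ω = 0` on all other pairs of basis vectors, is a closed
anti-symmetric non-degenerate odd (periplectic) form; hence `(L^{n,n}, ω)` is a
periplectic quasi-Frobenius Lie superalgebra. -/
theorem filiform_periplectic_form
    (K V : Type*) [Field K] [AddCommGroup V] [Module K V]
    (hchar : ringChar K ≠ 2)
    (n : ℕ) (hn : 2 ≤ n)
    (sub : Bool → Submodule K V) (br : V → V → V)
    (hLie : IsLieSuperAlg K V sub br)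
    (X Y : ℕ → V)
    -- parities of the basis vectors
    (hXeven : ∀ i, 1 ≤ i → i ≤ n → X i ∈ sub false)
    (hYodd : ∀ j, 1 ≤ j → j ≤ n → Y j ∈ sub true)
    -- `X₁,…,Xₙ, Y₁,…,Yₙ` is a basis of `V`
    (hind : LinearIndependent K
      (Sum.elim (fun i : Fin n => X (i.val + 1)) (fun j : Fin n => Y (j.val + 1))))
    (hspan : ⊤ ≤ Submodule.span K (Set.range
      (Sum.elim (fun i : Fin n => X (i.val + 1)) (fun j : Fin n => Y (j.val + 1)))))
    -- the filiform bracket relations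
    (hbrXX : ∀ i, 2 ≤ i → i ≤ n - 1 → br (X 1) (X i) = X (i + 1))
    (hbrX1n : br (X 1) (X n) = 0)
    (hbrX11 : br (X 1) (X 1) = 0)
    (hbrXX0 : ∀ i j, 2 ≤ i → i ≤ n → 2 ≤ j → j ≤ n → br (X i) (X j) = 0)
    (hbrXY : ∀ j, 1 ≤ j → j ≤ n - 1 → br (X 1) (Y j) = Y (j + 1))
    (hbrXYn : br (X 1) (Y n) = 0)
    (hbrXY0 : ∀ i j, 2 ≤ i → i ≤ n → 1 ≤ j → j ≤ n → br (X i) (Y j) = 0)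
    (hbrYY : ∀ i j, 1 ≤ i → i ≤ n → 1 ≤ j → j ≤ n → br (Y i) (Y j) = 0)
    -- the form
    (lam mu : K) (hlm : lam * mu ≠ 0)
    (ω : V → V → K) (hωbil : IsBilinMap K V K ω)
    (hω1 : ω (X 1) (Y n) = lam)
    (hω2 : ∀ i, 2 ≤ i → i ≤ n → ω (X i) (Y (n + 1 - i)) = (-1 : K) ^ (n - i) * mu)
    (hωXY0 : ∀ i j, 1 ≤ i → i ≤ n → 1 ≤ j → j ≤ n →
      ¬(i = 1 ∧ j = n) → ¬(2 ≤ i ∧ j = n + 1 - i) → ω (X i) (Y j) = 0)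
    (hωXX : ∀ i j, 1 ≤ i → i ≤ n → 1 ≤ j → j ≤ n → ω (X i) (X j) = 0)
    (hωYY : ∀ i j, 1 ≤ i → i ≤ n → 1 ≤ j → j ≤ n → ω (Y i) (Y j) = 0)
    (hωYX : ∀ i j, 1 ≤ i → i ≤ n → 1 ≤ j → j ≤ n → ω (Y j) (X i) = -ω (X i) (Y j)) :
    IsClosedForm K V sub br ω ∧ IsSuperSkew K V sub ω ∧ IsNondegForm K V ω ∧
      IsOddForm K V sub ω := by
  obtain ⟨ωa1, ωs1, ωa2, ωs2⟩ := hωbil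
  obtain ⟨ba1, bs1, ba2, bs2⟩ := hLie.bilin
  have hlam : lam ≠ 0 := left_ne_zero_of_mul hlm
  have hmu : mu ≠ 0 := right_ne_zero_of_mul hlm
  set SX := Submodule.span K (Set.range fun i : Fin n => X (i.val + 1)) with hSXdef
  set SY := Submodule.span K (Set.range fun j : Fin n => Y (j.val + 1)) with hSYdef
  have hXle : SX ≤ sub false := by
    rw [hSXdef, Submodule.span_le]
    rintro _ ⟨i, rfl⟩
    exact hXeven _ (by omega) (by have := i.isLt; omega)
  have hYle : SY ≤ sub true := by
    rw [hSYdef, Submodule.span_le]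
    rintro _ ⟨j, rfl⟩
    exact hYodd _ (by omega) (by have := j.isLt; omega)
  have hsup : SX ⊔ SY = ⊤ := by
    rw [eq_top_iff]
    refine le_trans hspan ?_
    rw [Set.Sum.elim_range, Submodule.span_union]
  have hdisj := hLie.compl.disjoint
  have hsubf : sub false = SX := by
    refine le_antisymm ?_ hXle
    intro a ha
    have hmem : a ∈ SX ⊔ SY := by rw [hsup]; exact Submodule.mem_top
    obtain ⟨u, hu, v, hv, rfl⟩ := Submodule.mem_sup.1 hmem
    have hvf : v ∈ sub false := by
      have : v = (u + v) - u := by abel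
      rw [this]
      exact Submodule.sub_mem _ ha (hXle hu)
    have hv0 : v = 0 := Submodule.disjoint_def.1 hdisj v hvf (hYle hv)
    rw [hv0, add_zero]
    exact hu
  have hsubt : sub true = SY := by
    refine le_antisymm ?_ hYle
    intro a ha
    have hmem : a ∈ SX ⊔ SY := by rw [hsup]; exact Submodule.mem_top
    obtain ⟨u, hu, v, hv, rfl⟩ := Submodule.mem_sup.1 hmem
    have huf : u ∈ sub true := by
      have : u = (u + v) - v := by abel
      rw [this]
      exact Submodule.sub_mem _ ha (hYle hv)
    have hu0 : u = 0 := Submodule.disjoint_def.1 hdisj u (hXle hu) huf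
    rw [hu0, zero_add]
    exact hv
  -- basic facts about ω and br
  have ω0r : ∀ x : V, ω x 0 = 0 := fun x => by
    have := ωs2 (0 : K) x 0; simpa using this
  have ωneg : ∀ x v : V, ω x (-v) = -ω x v := fun x v => by
    rw [← neg_one_smul K v, ωs2]; simp
  -- extensions to spans
  have ωXX0 : ∀ x ∈ SX, ∀ y ∈ SX, ω x y = 0 := by
    refine bilin_span_zero ωa1 ωs1 ωa2 ωs2 ?_
    rintro _ ⟨i, rfl⟩ _ ⟨j, rfl⟩
    exact hωXX _ _ (by omega) (by have := i.isLt; omega) (by omega) (by have := j.isLt; omega)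
  have ωYY0 : ∀ x ∈ SY, ∀ y ∈ SY, ω x y = 0 := by
    refine bilin_span_zero ωa1 ωs1 ωa2 ωs2 ?_
    rintro _ ⟨i, rfl⟩ _ ⟨j, rfl⟩
    exact hωYY _ _ (by omega) (by have := i.isLt; omega) (by omega) (by have := j.isLt; omega)
  have ωskewXY : ∀ x ∈ SX, ∀ y ∈ SY, ω y x + ω x y = 0 := by
    refine bilin_span_zero (f := fun x y => ω y x + ω x y) ?_ ?_ ?_ ?_ ?_
    · intro x y z; rw [ωa2, ωa1]; ring
    · intro c x y; rw [ωs2, ωs1]; simp only [smul_eq_mul]; ring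
    · intro x y z; rw [ωa1, ωa2]; ring
    · intro c x y; rw [ωs1, ωs2]; simp only [smul_eq_mul]; ring
    · rintro _ ⟨i, rfl⟩ _ ⟨j, rfl⟩
      dsimp only
      rw [hωYX (i.val + 1) (j.val + 1) (by omega) (by have := i.isLt; omega) (by omega)
        (by have := j.isLt; omega)]
      ring
  have brYY0 : ∀ y ∈ SY, ∀ z ∈ SY, br y z = 0 := by
    refine bilin_span_zero ba1 bs1 ba2 bs2 ?_
    rintro _ ⟨i, rfl⟩ _ ⟨j, rfl⟩
    exact hbrYY _ _ (by omega) (by have := i.isLt; omega) (by omega) (by have := j.isLt; omega)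
  -- bracket antisymmetry on basis
  have brYX : ∀ a c : ℕ, 1 ≤ a → a ≤ n → 1 ≤ c → c ≤ n →
      br (Y c) (X a) = -br (X a) (Y c) := by
    intro a c ha1 ha2 hc1 hc2
    have := hLie.antisymm false true (X a) (hXeven a ha1 ha2) (Y c) (hYodd c hc1 hc2)
    simpa [ssign] using this
  have brX1r : ∀ a : ℕ, 2 ≤ a → a ≤ n → br (X a) (X 1) = -br (X 1) (X a) := by
    intro a ha1 ha2
    have := hLie.antisymm false false (X 1) (hXeven 1 le_rfl (by omega)) (X a)
      (hXeven a (by omega) ha2)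
    simpa [ssign] using this
  -- the key two-term identity
  have SL : ∀ a c : ℕ, 2 ≤ a → a ≤ n - 1 → 1 ≤ c → c ≤ n - 1 →
      ω (X a) (Y (c + 1)) + ω (X (a + 1)) (Y c) = 0 := by
    intro a c ha1 ha2 hc1 hc2
    by_cases hcase : c = n - a
    · have e1 : c + 1 = n + 1 - a := by omega
      have e2 : c = n + 1 - (a + 1) := by omega
      rw [e1, hω2 a ha1 (by omega)]
      rw [show ω (X (a+1)) (Y c) = ω (X (a+1)) (Y (n + 1 - (a+1))) by rw [← e2]]
      rw [hω2 (a + 1) (by omega) (by omega)]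
      have e3 : n - a = (n - (a + 1)) + 1 := by omega
      rw [e3, pow_succ]
      ring
    · rw [hωXY0 a (c + 1) (by omega) (by omega) (by omega) (by omega) (by omega) (by omega),
        hωXY0 (a + 1) c (by omega) (by omega) (by omega) (by omega) (by omega) (by omega)]
      ring
  -- the key basis identity for closedness
  have KB : ∀ a b c : ℕ, 1 ≤ a → a ≤ n → 1 ≤ b → b ≤ n → 1 ≤ c → c ≤ n →
      ω (X a) (br (X b) (Y c)) + ω (Y c) (br (X a) (X b)) + ω (X b) (br (Y c) (X a)) = 0 := by
    intro a b c ha1 ha2 hb1 hb2 hc1 hc2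
    rw [brYX a c ha1 ha2 hc1 hc2, ωneg]
    by_cases haa : a = 1
    · subst haa
      by_cases hbb : b = 1
      · subst hbb
        rw [hbrX11]
        simp only [ω0r, neg_zero]
        ring
      · rw [hbrXY0 b c (by omega) hb2 hc1 hc2]
        by_cases hbn : b = n
        · rw [hbn, hbrX1n]
          by_cases hcn : c = n
          · rw [hcn, hbrXYn]
            simp only [ω0r, neg_zero]
            ring
          · rw [hbrXY c hc1 (by omega),
              hωXY0 n (c + 1) (by omega) le_rfl (by omega) (by omega) (by omega) (by omega)]
            simp only [ω0r, neg_zero]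
            ring
        · rw [hbrXX b (by omega) (by omega)]
          by_cases hcn : c = n
          · rw [hcn, hbrXYn,
              hωYX (b + 1) n (by omega) (by omega) (by omega) le_rfl,
              hωXY0 (b + 1) n (by omega) (by omega) (by omega) le_rfl (by omega) (by omega)]
            simp only [ω0r, neg_zero]
            ring
          · rw [hbrXY c hc1 (by omega),
              hωYX (b + 1) c (by omega) (by omega) hc1 hc2]
            simp only [ω0r, neg_zero]
            have := SL b c (by omega) (by omega) hc1 (by omega)
            linear_combination -this
    · by_cases hbb : b = 1
      · subst hbb
        rw [hbrXY0 a c (by omega) ha2 hc1 hc2, brX1r a (by omega) ha2, ωneg]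
        by_cases han : a = n
        · rw [han, hbrX1n]
          by_cases hcn : c = n
          · rw [hcn, hbrXYn]
            simp only [ω0r, neg_zero]
            ring
          · rw [hbrXY c hc1 (by omega),
              hωXY0 n (c + 1) (by omega) le_rfl (by omega) (by omega) (by omega) (by omega)]
            simp only [ω0r, neg_zero]
            ring
        · rw [hbrXX a (by omega) (by omega),
            hωYX (a + 1) c (by omega) (by omega) hc1 hc2]
          by_cases hcn : c = n
          · rw [hcn, hbrXYn,
              hωXY0 (a + 1) n (by omega) (by omega) (by omega) le_rfl (by omega) (by omega)]
            simp only [ω0r, neg_zero]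
            ring
          · rw [hbrXY c hc1 (by omega)]
            simp only [ω0r, neg_zero]
            have := SL a c (by omega) (by omega) hc1 (by omega)
            linear_combination this
      · rw [hbrXY0 b c (by omega) hb2 hc1 hc2,
          hbrXX0 a b (by omega) ha2 (by omega) hb2,
          hbrXY0 a c (by omega) ha2 hc1 hc2]
        simp only [ω0r, neg_zero]
        ring
  -- trilinear extension of the key identity
  have K3 : ∀ x ∈ SX, ∀ y ∈ SX, ∀ z ∈ SY,
      ω x (br y z) + ω z (br x y) + ω y (br z x) = 0 := by
    refine trilin_span_zero
      (f := fun x y z => ω x (br y z) + ω z (br x y) + ω y (br z x)) ?_ ?_ ?_ ?_ ?_ ?_ ?_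
    · intro x x' y z; simp only [ωa1, ba1, ωa2, ba2]; ring
    · intro c x y z; simp only [ωs1, bs1, ωs2, bs2, smul_eq_mul]; ring
    · intro x y y' z; simp only [ωa1, ba1, ωa2, ba2]; ring
    · intro c x y z; simp only [ωs1, bs1, ωs2, bs2, smul_eq_mul]; ring
    · intro x y z z'; simp only [ωa1, ba1, ωa2, ba2]; ring
    · intro c x y z; simp only [ωs1, bs1, ωs2, bs2, smul_eq_mul]; ring
    · rintro _ ⟨i, rfl⟩ _ ⟨j, rfl⟩ _ ⟨k, rfl⟩
      exact KB _ _ _ (by omega) (by have := i.isLt; omega) (by omega)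
        (by have := j.isLt; omega) (by omega) (by have := k.isLt; omega)
  -- graded membership helpers
  have memXX : ∀ u ∈ sub false, ∀ v ∈ sub false, br u v ∈ SX := by
    intro u hu v hv
    have h : br u v ∈ sub false := hLie.graded false false u hu v hv
    rwa [hsubf] at h
  have memXY : ∀ u ∈ sub false, ∀ v ∈ sub true, br u v ∈ SY := by
    intro u hu v hv
    have h : br u v ∈ sub true := hLie.graded false true u hu v hv
    rwa [hsubt] at h
  have memYX : ∀ u ∈ sub true, ∀ v ∈ sub false, br u v ∈ SY := by
    intro u hu v hv
    have h : br u v ∈ sub true := hLie.graded true false u hu v hv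
    rwa [hsubt] at h
  have memYY : ∀ u ∈ sub true, ∀ v ∈ sub true, br u v ∈ SX := by
    intro u hu v hv
    have h : br u v ∈ sub false := hLie.graded true true u hu v hv
    rwa [hsubf] at h
  -- closedness
  have hclosed : IsClosedForm K V sub br ω := by
    intro i j k x hx y hy z hz
    cases i <;> cases j <;> cases k
    · have hx' : x ∈ SX := hsubf ▸ hx
      have hy' : y ∈ SX := hsubf ▸ hy
      have hz' : z ∈ SX := hsubf ▸ hz
      rw [ωXX0 x hx' _ (memXX y hy z hz), ωXX0 z hz' _ (memXX x hx y hy),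
        ωXX0 y hy' _ (memXX z hz x hx)]
      simp
    · -- f f t
      have hx' : x ∈ SX := hsubf ▸ hx
      have hy' : y ∈ SX := hsubf ▸ hy
      have hz' : z ∈ SY := hsubt ▸ hz
      have := K3 x hx' y hy' z hz'
      simp only [ssign, Bool.and_self, Bool.and_false, Bool.and_true, Bool.false_and,
        Bool.true_and, Bool.false_eq_true, if_false, if_true]
      linear_combination this
    · -- f t f
      have hx' : x ∈ SX := hsubf ▸ hx
      have hy' : y ∈ SY := hsubt ▸ hy
      have hz' : z ∈ SX := hsubf ▸ hz
      have := K3 z hz' x hx' y hy'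
      simp only [ssign, Bool.and_self, Bool.and_false, Bool.and_true, Bool.false_and,
        Bool.true_and, Bool.false_eq_true, if_false, if_true]
      linear_combination this
    · -- f t t
      have hx' : x ∈ SX := hsubf ▸ hx
      have hy' : y ∈ SY := hsubt ▸ hy
      have hz' : z ∈ SY := hsubt ▸ hz
      rw [ωXX0 x hx' _ (memYY y hy z hz), ωYY0 z hz' _ (memXY x hx y hy),
        ωYY0 y hy' _ (memYX z hz x hx)]
      simp
    · -- t f f
      have hx' : x ∈ SY := hsubt ▸ hx
      have hy' : y ∈ SX := hsubf ▸ hy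
      have hz' : z ∈ SX := hsubf ▸ hz
      have := K3 y hy' z hz' x hx'
      simp only [ssign, Bool.and_self, Bool.and_false, Bool.and_true, Bool.false_and,
        Bool.true_and, Bool.false_eq_true, if_false, if_true]
      linear_combination this
    · -- t f t
      have hx' : x ∈ SY := hsubt ▸ hx
      have hy' : y ∈ SX := hsubf ▸ hy
      have hz' : z ∈ SY := hsubt ▸ hz
      rw [ωYY0 x hx' _ (memXY y hy z hz), ωYY0 z hz' _ (memYX x hx y hy),
        ωXX0 y hy' _ (memYY z hz x hx)]
      simp
    · -- t t f
      have hx' : x ∈ SY := hsubt ▸ hx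
      have hy' : y ∈ SY := hsubt ▸ hy
      have hz' : z ∈ SX := hsubf ▸ hz
      rw [ωYY0 x hx' _ (memYX y hy z hz), ωXX0 z hz' _ (memYY x hx y hy),
        ωYY0 y hy' _ (memXY z hz x hx)]
      simp
    · -- t t t
      have hx' : x ∈ SY := hsubt ▸ hx
      have hy' : y ∈ SY := hsubt ▸ hy
      have hz' : z ∈ SY := hsubt ▸ hz
      rw [brYY0 y hy' z hz', brYY0 x hx' y hy', brYY0 z hz' x hx']
      simp only [ω0r]
      simp
  -- super-skewness
  have hskew : IsSuperSkew K V sub ω := by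
    intro i j x hx y hy
    cases i <;> cases j
    · have hx' : x ∈ SX := hsubf ▸ hx
      have hy' : y ∈ SX := hsubf ▸ hy
      rw [ωXX0 x hx' y hy', ωXX0 y hy' x hx']
      simp [ssign]
    · have hx' : x ∈ SX := hsubf ▸ hx
      have hy' : y ∈ SY := hsubt ▸ hy
      have := ωskewXY x hx' y hy'
      simp only [ssign, Bool.false_and, Bool.false_eq_true, if_false]
      linear_combination this
    · have hx' : x ∈ SY := hsubt ▸ hx
      have hy' : y ∈ SX := hsubf ▸ hy
      have := ωskewXY y hy' x hx'
      simp only [ssign, Bool.true_and, Bool.false_eq_true, if_false]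
      linear_combination this
    · have hx' : x ∈ SY := hsubt ▸ hx
      have hy' : y ∈ SY := hsubt ▸ hy
      rw [ωYY0 x hx' y hy', ωYY0 y hy' x hx']
      simp [ssign]
  -- oddness
  have hodd : IsOddForm K V sub ω := by
    intro i x hx y hy
    cases i
    · exact ωXX0 x (hsubf ▸ hx) y (hsubf ▸ hy)
    · exact ωYY0 x (hsubt ▸ hx) y (hsubt ▸ hy)
  -- non-degeneracy
  have hnd : IsNondegForm K V ω := by
    intro x hx0
    set B : Module.Basis (Fin n ⊕ Fin n) K V := Module.Basis.mk hind hspan with hB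
    have hBinl : ∀ i : Fin n, B (Sum.inl i) = X (i.val + 1) := fun i => by
      rw [hB, Module.Basis.mk_apply]; rfl
    have hBinr : ∀ j : Fin n, B (Sum.inr j) = Y (j.val + 1) := fun j => by
      rw [hB, Module.Basis.mk_apply]; rfl
    have hrepr : ∀ y : V, ω x y = (B.repr x).sum fun s c => c • ω (B s) y := by
      intro y
      let φ : V →ₗ[K] K :=
        { toFun := fun v => ω v y
          map_add' := fun a b => ωa1 a b y
          map_smul' := fun c a => by simpa using ωs1 c a y }
      have h1 : ω x y = φ x := rfl
      rw [h1]
      conv_lhs => rw [← B.linearCombination_repr x]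
      rw [Finsupp.linearCombination_apply, map_finsuppSum]
      refine Finsupp.sum_congr fun s _ => ?_
      rw [map_smul]
      rfl
    have coordX : ∀ i : Fin n, B.repr x (Sum.inl i) = 0 := by
      intro i
      have hilt := i.isLt
      have hy := hx0 (Y (n - i.val))
      rw [hrepr] at hy
      rw [Finsupp.sum_eq_single (Sum.inl i) ?_ ?_] at hy
      · rw [hBinl] at hy
        rcases Nat.eq_zero_or_pos i.val with hi0 | hip
        · rw [hi0] at hy
          simp only [Nat.sub_zero] at hy
          rw [hω1] at hy
          exact (smul_eq_zero.1 hy).resolve_right hlam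
        · have e : n - i.val = n + 1 - (i.val + 1) := by omega
          rw [e, hω2 (i.val + 1) (by omega) (by omega)] at hy
          refine (smul_eq_zero.1 hy).resolve_right ?_
          exact mul_ne_zero (pow_ne_zero _ (neg_ne_zero.2 one_ne_zero)) hmu
      · intro t ht hti
        rcases t with i' | j'
        · have hne : i'.val ≠ i.val := fun h => hti (by rw [Fin.ext h])
          have hilt' := i'.isLt
          rw [hBinl, hωXY0 (i'.val + 1) (n - i.val) (by omega) (by omega) (by omega)
            (by omega) (by omega) (by omega), smul_zero]
        · have hjlt := j'.isLt
          rw [hBinr, hωYY (j'.val + 1) (n - i.val) (by omega) (by omega) (by omega)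
            (by omega), smul_zero]
      · intro _; rw [zero_smul]
    have coordY : ∀ j : Fin n, B.repr x (Sum.inr j) = 0 := by
      intro j
      have hjlt := j.isLt
      by_cases hj : j.val = n - 1
      · have hy := hx0 (X 1)
        rw [hrepr] at hy
        rw [Finsupp.sum_eq_single (Sum.inr j) ?_ ?_] at hy
        · rw [hBinr, hωYX 1 (j.val + 1) le_rfl (by omega) (by omega) (by omega)] at hy
          rw [show j.val + 1 = n by omega, hω1] at hy
          exact (smul_eq_zero.1 hy).resolve_right (neg_ne_zero.2 hlam)
        · intro t ht hti
          rcases t with i' | j'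
          · have hilt' := i'.isLt
            rw [hBinl, hωXX (i'.val + 1) 1 (by omega) (by omega) le_rfl (by omega), smul_zero]
          · have hne : j'.val ≠ j.val := fun h => hti (by rw [Fin.ext h])
            have hjlt' := j'.isLt
            rw [hBinr, hωYX 1 (j'.val + 1) le_rfl (by omega) (by omega) (by omega),
              hωXY0 1 (j'.val + 1) le_rfl (by omega) (by omega) (by omega) (by omega)
              (by omega), neg_zero, smul_zero]
        · intro _; rw [zero_smul]
      · have hy := hx0 (X (n - j.val))
        rw [hrepr] at hy
        rw [Finsupp.sum_eq_single (Sum.inr j) ?_ ?_] at hy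
        · rw [hBinr, hωYX (n - j.val) (j.val + 1) (by omega) (by omega) (by omega)
            (by omega)] at hy
          rw [show j.val + 1 = n + 1 - (n - j.val) by omega,
            hω2 (n - j.val) (by omega) (by omega)] at hy
          refine (smul_eq_zero.1 hy).resolve_right ?_
          exact neg_ne_zero.2 (mul_ne_zero (pow_ne_zero _ (neg_ne_zero.2 one_ne_zero)) hmu)
        · intro t ht hti
          rcases t with i' | j'
          · have hilt' := i'.isLt
            rw [hBinl, hωXX (i'.val + 1) (n - j.val) (by omega) (by omega) (by omega)
              (by omega), smul_zero]
          · have hne : j'.val ≠ j.val := fun h => hti (by rw [Fin.ext h])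
            have hjlt' := j'.isLt
            rw [hBinr, hωYX (n - j.val) (j'.val + 1) (by omega) (by omega) (by omega)
              (by omega), hωXY0 (n - j.val) (j'.val + 1) (by omega) (by omega) (by omega)
              (by omega) (by omega) (by omega), neg_zero, smul_zero]
        · intro _; rw [zero_smul]
    have hr0 : B.repr x = 0 := by
      ext s
      rcases s with i | j
      · simpa using coordX i
      · simpa using coordY j
    exact (LinearEquiv.map_eq_zero_iff B.repr).1 hr0
  exact ⟨hclosed, hskew, hnd, hodd⟩
end
end

section
/- Let n ≥ 2 be even and m ≥ 1 be odd. Then the filiform Lie superalgebra L^{n,m} over 𝕂 admits a closed anti-symmetric non-degenerate even (orthosymplectic) bilinear form; hence L^{n,m} is an orthosymplectic quasi-Frobenius Lie superalgebra. -/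
noncomputable section

section Helpers
variable {K V : Type*} [Field K] [AddCommGroup V] [Module K V]

lemma linSpanZero (f : V → K) (ha : ∀ x y, f (x + y) = f x + f y)
    (hs : ∀ (c : K) (x : V), f (c • x) = c * f x) (s : Set V)
    (h : ∀ x ∈ s, f x = 0) : ∀ x ∈ Submodule.span K s, f x = 0 := by
  have h0 : f 0 = 0 := by simpa using hs 0 0
  intro x hx
  induction hx using Submodule.span_induction with
  | mem x hx => exact h x hx
  | zero => exact h0
  | add x y _ _ hfx hfy => rw [ha, hfx, hfy]; ring
  | smul c x _ hfx => rw [hs, hfx]; ring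

lemma bilinSpanZero (F : V → V → K)
    (ha1 : ∀ x y z, F (x + y) z = F x z + F y z)
    (hs1 : ∀ (c : K) (x z : V), F (c • x) z = c * F x z)
    (ha2 : ∀ x y z, F x (y + z) = F x y + F x z)
    (hs2 : ∀ (c : K) (x y : V), F x (c • y) = c * F x y)
    (s t : Set V) (h : ∀ x ∈ s, ∀ y ∈ t, F x y = 0) :
    ∀ x ∈ Submodule.span K s, ∀ y ∈ Submodule.span K t, F x y = 0 := by
  intro x hx y hy
  refine linSpanZero (fun x => F x y) (fun a b => ha1 a b y) (fun c a => hs1 c a y) s ?_ x hx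
  intro x' hx'
  exact linSpanZero (F x') (ha2 x') (fun c a => hs2 c x' a) t (h x' hx') y hy

lemma trilinSpanZero (F : V → V → V → K)
    (ha1 : ∀ x x' y z, F (x + x') y z = F x y z + F x' y z)
    (hs1 : ∀ (c : K) (x y z : V), F (c • x) y z = c * F x y z)
    (ha2 : ∀ x y y' z, F x (y + y') z = F x y z + F x y' z)
    (hs2 : ∀ (c : K) (x y z : V), F x (c • y) z = c * F x y z)
    (ha3 : ∀ x y z z', F x y (z + z') = F x y z + F x y z')
    (hs3 : ∀ (c : K) (x y z : V), F x y (c • z) = c * F x y z)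
    (s t u : Set V) (h : ∀ x ∈ s, ∀ y ∈ t, ∀ z ∈ u, F x y z = 0) :
    ∀ x ∈ Submodule.span K s, ∀ y ∈ Submodule.span K t, ∀ z ∈ Submodule.span K u,
      F x y z = 0 := by
  intro x hx y hy z hz
  refine linSpanZero (fun x => F x y z) (fun a b => ha1 a b y z) (fun c a => hs1 c a y z)
    s ?_ x hx
  intro x' hx'
  exact bilinSpanZero (F x') (fun a b c => ha2 x' a b c) (fun c a b => hs2 c x' a b)
    (fun a b c => ha3 x' a b c) (fun c a b => hs3 c x' a b) t u (h x' hx') y hy z hz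

/-- structure-constant matrix of the orthosymplectic form on `L^{n,m}`. -/
def cmat (K : Type*) [Field K] (n m : ℕ) : Fin n ⊕ Fin m → Fin n ⊕ Fin m → K
  | Sum.inl a, Sum.inl b =>
      if a.val + b.val + 2 = n + 1 then (if (a.val + 1) % 2 = 0 then 1 else -1) else 0
  | Sum.inr a, Sum.inr b =>
      if a.val + b.val + 2 = m + 1 then (if (a.val + 1) % 2 = 0 then 1 else -1) else 0
  | Sum.inl _, Sum.inr _ => 0
  | Sum.inr _, Sum.inl _ => 0

end Helpers

set_option maxHeartbeats 1600000 in
/-- For `n ≥ 2` even and `m ≥ 1` odd, the filiform Lie superalgebra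
`L^{n,m}` admits a closed anti-symmetric non-degenerate **even** (orthosymplectic)
bilinear form; hence it is an orthosymplectic quasi-Frobenius Lie superalgebra. -/
theorem filiform_orthosymplectic_exists
    (K V : Type*) [Field K] [AddCommGroup V] [Module K V]
    (hchar : ringChar K ≠ 2)
    (n m : ℕ) (hn2 : 2 ≤ n) (hneven : Even n) (hm1 : 1 ≤ m) (hmodd : Odd m)
    (sub : Bool → Submodule K V) (br : V → V → V)
    (hLie : IsLieSuperAlg K V sub br)
    (X Y : ℕ → V)
    (hXeven : ∀ i, 1 ≤ i → i ≤ n → X i ∈ sub false)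
    (hYodd : ∀ j, 1 ≤ j → j ≤ m → Y j ∈ sub true)
    (hind : LinearIndependent K
      (Sum.elim (fun i : Fin n => X (i.val + 1)) (fun j : Fin m => Y (j.val + 1))))
    (hspan : ⊤ ≤ Submodule.span K (Set.range
      (Sum.elim (fun i : Fin n => X (i.val + 1)) (fun j : Fin m => Y (j.val + 1)))))
    (hbrXX : ∀ i, 2 ≤ i → i ≤ n - 1 → br (X 1) (X i) = X (i + 1))
    (hbrX1n : br (X 1) (X n) = 0)
    (hbrX11 : br (X 1) (X 1) = 0)
    (hbrXX0 : ∀ i j, 2 ≤ i → i ≤ n → 2 ≤ j → j ≤ n → br (X i) (X j) = 0)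
    (hbrXY : ∀ j, 1 ≤ j → j ≤ m - 1 → br (X 1) (Y j) = Y (j + 1))
    (hbrXYm : br (X 1) (Y m) = 0)
    (hbrXY0 : ∀ i j, 2 ≤ i → i ≤ n → 1 ≤ j → j ≤ m → br (X i) (Y j) = 0)
    (hbrYY : ∀ i j, 1 ≤ i → i ≤ m → 1 ≤ j → j ≤ m → br (Y i) (Y j) = 0) :
    ∃ ω : V → V → K, IsBilinMap K V K ω ∧ IsClosedForm K V sub br ω ∧
      IsSuperSkew K V sub ω ∧ IsNondegForm K V ω ∧ IsEvenForm K V sub ω := by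
  classical
  obtain ⟨bra1, brs1, bra2, brs2⟩ := hLie.bilin
  have hn2' : n % 2 = 0 := Nat.even_iff.mp hneven
  have hm2' : m % 2 = 1 := Nat.odd_iff.mp hmodd
  set B : Module.Basis (Fin n ⊕ Fin m) K V := Module.Basis.mk hind hspan with hBdef
  have hB : ∀ p, B p = Sum.elim (fun i : Fin n => X (i.val + 1))
      (fun j : Fin m => Y (j.val + 1)) p := fun p => Module.Basis.mk_apply hind hspan p
  set ω : V → V → K := fun x y => ∑ p, ∑ q, cmat K n m p q * B.repr x p * B.repr y q with hωdef
  -- bilinearity of ω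
  have hωa1 : ∀ x y z : V, ω (x + y) z = ω x z + ω y z := by
    intro x y z
    simp only [hωdef, map_add, Finsupp.add_apply]
    rw [← Finset.sum_add_distrib]
    refine Finset.sum_congr rfl fun p _ => ?_
    rw [← Finset.sum_add_distrib]
    exact Finset.sum_congr rfl fun q _ => by ring
  have hωs1 : ∀ (c : K) (x y : V), ω (c • x) y = c * ω x y := by
    intro c x y
    simp only [hωdef, map_smul, Finsupp.smul_apply, smul_eq_mul]
    rw [Finset.mul_sum]
    refine Finset.sum_congr rfl fun p _ => ?_
    rw [Finset.mul_sum]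
    exact Finset.sum_congr rfl fun q _ => by ring
  have hωa2 : ∀ x y z : V, ω x (y + z) = ω x y + ω x z := by
    intro x y z
    simp only [hωdef, map_add, Finsupp.add_apply]
    rw [← Finset.sum_add_distrib]
    refine Finset.sum_congr rfl fun p _ => ?_
    rw [← Finset.sum_add_distrib]
    exact Finset.sum_congr rfl fun q _ => by ring
  have hωs2 : ∀ (c : K) (x y : V), ω x (c • y) = c * ω x y := by
    intro c x y
    simp only [hωdef, map_smul, Finsupp.smul_apply, smul_eq_mul]
    rw [Finset.mul_sum]
    refine Finset.sum_congr rfl fun p _ => ?_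
    rw [Finset.mul_sum]
    exact Finset.sum_congr rfl fun q _ => by ring
  have hωbil : IsBilinMap K V K ω :=
    ⟨hωa1, fun c x y => by rw [smul_eq_mul]; exact hωs1 c x y,
     hωa2, fun c x y => by rw [smul_eq_mul]; exact hωs2 c x y⟩
  have hω0r : ∀ x, ω x 0 = 0 := fun x => by
    have := hωs2 0 x 0; simpa using this
  have hωnegr : ∀ x v, ω x (-v) = -ω x v := fun x v => by
    have := hωs2 (-1) x v; simpa using this
  have hωsubr : ∀ x u v, ω x (u - v) = ω x u - ω x v := fun x u v => by
    rw [sub_eq_add_neg, hωa2, hωnegr]; ring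
  -- values on the basis
  have hωB : ∀ p q, ω (B p) (B q) = cmat K n m p q := by
    intro p q
    simp only [hωdef, Module.Basis.repr_self]
    rw [Finset.sum_eq_single p]
    · rw [Finset.sum_eq_single q]
      · simp
      · intro b _ hb; simp [Finsupp.single_eq_of_ne hb]
      · intro h; exact absurd (Finset.mem_univ _) h
    · intro b _ hb
      simp [Finsupp.single_eq_of_ne hb]
    · intro h; exact absurd (Finset.mem_univ _) h
  have hXB : ∀ p (_ : 1 ≤ p) (h2 : p ≤ n), X p = B (Sum.inl ⟨p - 1, by omega⟩) := by
    intro p h1 h2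
    rw [hB]; simp only [Sum.elim_inl]
    congr 1; omega
  have hYB : ∀ q (_ : 1 ≤ q) (h2 : q ≤ m), Y q = B (Sum.inr ⟨q - 1, by omega⟩) := by
    intro q h1 h2
    rw [hB]; simp only [Sum.elim_inr]
    congr 1; omega
  have hωXX : ∀ p q, 1 ≤ p → p ≤ n → 1 ≤ q → q ≤ n →
      ω (X p) (X q) = if p + q = n + 1 then (if p % 2 = 0 then 1 else -1) else 0 := by
    intro p q h1 h2 h3 h4
    rw [hXB p h1 h2, hXB q h3 h4, hωB]
    simp only [cmat]
    split_ifs <;> first | rfl | (exfalso; omega)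
  have hωYY : ∀ p q, 1 ≤ p → p ≤ m → 1 ≤ q → q ≤ m →
      ω (Y p) (Y q) = if p + q = m + 1 then (if p % 2 = 0 then 1 else -1) else 0 := by
    intro p q h1 h2 h3 h4
    rw [hYB p h1 h2, hYB q h3 h4, hωB]
    simp only [cmat]
    split_ifs <;> first | rfl | (exfalso; omega)
  have hωXY : ∀ p q, 1 ≤ p → p ≤ n → 1 ≤ q → q ≤ m → ω (X p) (Y q) = 0 := by
    intro p q h1 h2 h3 h4
    rw [hXB p h1 h2, hYB q h3 h4, hωB]
    simp only [cmat]
  have hωYX : ∀ p q, 1 ≤ p → p ≤ m → 1 ≤ q → q ≤ n → ω (Y p) (X q) = 0 := by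
    intro p q h1 h2 h3 h4
    rw [hYB p h1 h2, hXB q h3 h4, hωB]
    simp only [cmat]
  -- the homogeneous components as spans
  have hsubF : sub false = Submodule.span K (Set.range fun a : Fin n => X (a.val + 1)) := by
    refine le_antisymm ?_ (Submodule.span_le.mpr ?_)
    · intro v hv
      have hv' : v ∈ Submodule.span K (Set.range (Sum.elim (fun i : Fin n => X (i.val + 1))
          (fun j : Fin m => Y (j.val + 1)))) := hspan trivial
      rw [Set.Sum.elim_range, Submodule.span_union] at hv'
      obtain ⟨a, ha, b, hb, hab⟩ := Submodule.mem_sup.mp hv'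
      have hbT : b ∈ sub true := by
        refine Submodule.span_le.mpr ?_ hb
        rintro _ ⟨j, rfl⟩
        exact hYodd _ (Nat.le_add_left 1 _) j.isLt
      have haF : a ∈ sub false := by
        refine Submodule.span_le.mpr ?_ ha
        rintro _ ⟨i, rfl⟩
        exact hXeven _ (Nat.le_add_left 1 _) i.isLt
      have hbF : b ∈ sub false := by
        have hb' : b = v - a := by rw [← hab]; abel
        rw [hb']; exact Submodule.sub_mem _ hv haF
      have hb0 : b = 0 := by
        have hbb : b ∈ sub false ⊓ sub true := ⟨hbF, hbT⟩
        rw [hLie.compl.inf_eq_bot] at hbb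
        simpa using hbb
      rw [← hab, hb0, add_zero]; exact ha
    · rintro _ ⟨i, rfl⟩; exact hXeven _ (Nat.le_add_left 1 _) i.isLt
  have hsubT : sub true = Submodule.span K (Set.range fun a : Fin m => Y (a.val + 1)) := by
    refine le_antisymm ?_ (Submodule.span_le.mpr ?_)
    · intro v hv
      have hv' : v ∈ Submodule.span K (Set.range (Sum.elim (fun i : Fin n => X (i.val + 1))
          (fun j : Fin m => Y (j.val + 1)))) := hspan trivial
      rw [Set.Sum.elim_range, Submodule.span_union] at hv'
      obtain ⟨a, ha, b, hb, hab⟩ := Submodule.mem_sup.mp hv'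
      have hbT : b ∈ sub true := by
        refine Submodule.span_le.mpr ?_ hb
        rintro _ ⟨j, rfl⟩
        exact hYodd _ (Nat.le_add_left 1 _) j.isLt
      have haF : a ∈ sub false := by
        refine Submodule.span_le.mpr ?_ ha
        rintro _ ⟨i, rfl⟩
        exact hXeven _ (Nat.le_add_left 1 _) i.isLt
      have haT : a ∈ sub true := by
        have ha' : a = v - b := by rw [← hab]; abel
        rw [ha']; exact Submodule.sub_mem _ hv hbT
      have ha0 : a = 0 := by
        have haa : a ∈ sub false ⊓ sub true := ⟨haF, haT⟩
        rw [hLie.compl.inf_eq_bot] at haa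
        simpa using haa
      rw [← hab, ha0, zero_add]; exact hb
    · rintro _ ⟨j, rfl⟩; exact hYodd _ (Nat.le_add_left 1 _) j.isLt
  -- full bracket formulas
  have hssFF : ssign K false false = 1 := by simp [ssign]
  have hssFT : ssign K false true = 1 := by simp [ssign]
  have hssTF : ssign K true false = 1 := by simp [ssign]
  have hssTT : ssign K true true = -1 := by simp [ssign]
  have hbrXXf : ∀ p q, 1 ≤ p → p ≤ n → 1 ≤ q → q ≤ n → br (X p) (X q) =
      (if p = 1 then (if 2 ≤ q ∧ q ≤ n - 1 then X (q + 1) else 0) else 0)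
      - (if q = 1 then (if 2 ≤ p ∧ p ≤ n - 1 then X (p + 1) else 0) else 0) := by
    intro p q hp1 hpn hq1 hqn
    have haux : ∀ r, 1 ≤ r → r ≤ n →
        br (X 1) (X r) = if 2 ≤ r ∧ r ≤ n - 1 then X (r + 1) else 0 := by
      intro r hr1 hrn
      by_cases hr2 : 2 ≤ r ∧ r ≤ n - 1
      · rw [if_pos hr2, hbrXX r hr2.1 hr2.2]
      · rw [if_neg hr2]
        rcases Nat.lt_or_ge r 2 with h | h
        · have : r = 1 := by omega
          rw [this, hbrX11]
        · have : r = n := by omega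
          rw [this, hbrX1n]
    by_cases hp : p = 1 <;> by_cases hq : q = 1
    · subst hp; subst hq
      rw [hbrX11]; simp
    · subst hp
      rw [if_pos rfl, if_neg hq, sub_zero, haux q hq1 hqn]
    · subst hq
      rw [if_neg hp, if_pos rfl, zero_sub]
      have ha := hLie.antisymm false false (X 1) (hXeven 1 le_rfl (by omega))
        (X p) (hXeven p hp1 hpn)
      rw [ha, hssFF, one_smul, haux p hp1 hpn]
    · rw [if_neg hp, if_neg hq, sub_zero,
        hbrXX0 p q (by omega) hpn (by omega) hqn]
  have hbrXYf : ∀ p q, 1 ≤ p → p ≤ n → 1 ≤ q → q ≤ m → br (X p) (Y q) =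
      if p = 1 then (if q ≤ m - 1 then Y (q + 1) else 0) else 0 := by
    intro p q hp1 hpn hq1 hqm
    by_cases hp : p = 1
    · subst hp; rw [if_pos rfl]
      by_cases hq2 : q ≤ m - 1
      · rw [if_pos hq2, hbrXY q hq1 hq2]
      · have : q = m := by omega
        rw [if_neg hq2, this, hbrXYm]
    · rw [if_neg hp, hbrXY0 p q (by omega) hpn hq1 hqm]
  have hbrYXf : ∀ p q, 1 ≤ p → p ≤ n → 1 ≤ q → q ≤ m → br (Y q) (X p) =
      -(if p = 1 then (if q ≤ m - 1 then Y (q + 1) else 0) else 0) := by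
    intro p q hp1 hpn hq1 hqm
    have ha := hLie.antisymm false true (X p) (hXeven p hp1 hpn) (Y q) (hYodd q hq1 hqm)
    rw [ha, hssFT, one_smul, hbrXYf p q hp1 hpn hq1 hqm]
  -- even form
  have hEven : IsEvenForm K V sub ω := by
    intro x y h
    rcases h with ⟨hx, hy⟩ | ⟨hx, hy⟩
    · rw [hsubF] at hx; rw [hsubT] at hy
      refine bilinSpanZero ω hωa1 hωs1 hωa2 hωs2 _ _ ?_ x hx y hy
      rintro _ ⟨a, rfl⟩ _ ⟨b, rfl⟩
      exact hωXY _ _ (Nat.le_add_left 1 _) a.isLt (Nat.le_add_left 1 _) b.isLt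
    · rw [hsubT] at hx; rw [hsubF] at hy
      refine bilinSpanZero ω hωa1 hωs1 hωa2 hωs2 _ _ ?_ x hx y hy
      rintro _ ⟨a, rfl⟩ _ ⟨b, rfl⟩
      exact hωYX _ _ (Nat.le_add_left 1 _) a.isLt (Nat.le_add_left 1 _) b.isLt
  -- super skew
  have hskewgen : ∀ (s : K) (SA SB : Set V),
      (∀ x ∈ SA, ∀ y ∈ SB, ω y x + s * ω x y = 0) →
      ∀ x ∈ Submodule.span K SA, ∀ y ∈ Submodule.span K SB, ω y x + s * ω x y = 0 := by
    intro s SA SB h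
    refine bilinSpanZero (fun u v => ω v u + s * ω u v)
      (fun a b c => by simp only [hωa1, hωa2]; ring)
      (fun c a b => by simp only [hωs1, hωs2]; ring)
      (fun a b c => by simp only [hωa1, hωa2]; ring)
      (fun c a b => by simp only [hωs1, hωs2]; ring) _ _ h
  have hSkew : IsSuperSkew K V sub ω := by
    intro i j x hx y hy
    have key : ω y x + ssign K i j * ω x y = 0 := by
      cases i <;> cases j
      · rw [hsubF] at hx hy
        refine hskewgen _ _ _ ?_ x hx y hy
        rintro _ ⟨a, rfl⟩ _ ⟨b, rfl⟩
        rw [hssFF, one_mul, hωXX _ _ (Nat.le_add_left 1 _) a.isLt (Nat.le_add_left 1 _) b.isLt,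
          hωXX _ _ (Nat.le_add_left 1 _) b.isLt (Nat.le_add_left 1 _) a.isLt]
        split_ifs <;> first | ring1 | (exfalso; omega)
      · rw [hsubF] at hx; rw [hsubT] at hy
        refine hskewgen _ _ _ ?_ x hx y hy
        rintro _ ⟨a, rfl⟩ _ ⟨b, rfl⟩
        rw [hωXY _ _ (Nat.le_add_left 1 _) a.isLt (Nat.le_add_left 1 _) b.isLt,
          hωYX _ _ (Nat.le_add_left 1 _) b.isLt (Nat.le_add_left 1 _) a.isLt]
        ring
      · rw [hsubT] at hx; rw [hsubF] at hy
        refine hskewgen _ _ _ ?_ x hx y hy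
        rintro _ ⟨a, rfl⟩ _ ⟨b, rfl⟩
        rw [hωYX _ _ (Nat.le_add_left 1 _) a.isLt (Nat.le_add_left 1 _) b.isLt,
          hωXY _ _ (Nat.le_add_left 1 _) b.isLt (Nat.le_add_left 1 _) a.isLt]
        ring
      · rw [hsubT] at hx hy
        refine hskewgen _ _ _ ?_ x hx y hy
        rintro _ ⟨a, rfl⟩ _ ⟨b, rfl⟩
        rw [hssTT, hωYY _ _ (Nat.le_add_left 1 _) a.isLt (Nat.le_add_left 1 _) b.isLt,
          hωYY _ _ (Nat.le_add_left 1 _) b.isLt (Nat.le_add_left 1 _) a.isLt]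
        split_ifs <;> first | ring1 | (exfalso; omega)
    linear_combination key
  -- closedness
  have cocy : ∀ (s1 s2 s3 : K) (SA SB SC : Set V),
      (∀ x ∈ SA, ∀ y ∈ SB, ∀ z ∈ SC,
        s1 * ω x (br y z) + s2 * ω z (br x y) + s3 * ω y (br z x) = 0) →
      ∀ x ∈ Submodule.span K SA, ∀ y ∈ Submodule.span K SB, ∀ z ∈ Submodule.span K SC,
        s1 * ω x (br y z) + s2 * ω z (br x y) + s3 * ω y (br z x) = 0 := by
    intro s1 s2 s3 SA SB SC h
    refine trilinSpanZero
      (fun x y z => s1 * ω x (br y z) + s2 * ω z (br x y) + s3 * ω y (br z x))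
      (fun x x' y z => by simp only [hωa1, hωa2, bra1, bra2]; ring)
      (fun c x y z => by simp only [hωs1, hωs2, brs1, brs2]; ring)
      (fun x y y' z => by simp only [hωa1, hωa2, bra1, bra2]; ring)
      (fun c x y z => by simp only [hωs1, hωs2, brs1, brs2]; ring)
      (fun x y z z' => by simp only [hωa1, hωa2, bra1, bra2]; ring)
      (fun c x y z => by simp only [hωs1, hωs2, brs1, brs2]; ring)
      _ _ _ h
  have hClosed : IsClosedForm K V sub br ω := by
    intro i j k x hx y hy z hz
    cases i <;> cases j <;> cases k
    · -- F F F
      rw [hsubF] at hx hy hz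
      refine cocy _ _ _ _ _ _ ?_ x hx y hy z hz
      rintro _ ⟨a, rfl⟩ _ ⟨b, rfl⟩ _ ⟨c, rfl⟩
      have ha1 : 1 ≤ a.val + 1 := Nat.le_add_left 1 _
      have han : a.val + 1 ≤ n := a.isLt
      have hb1 : 1 ≤ b.val + 1 := Nat.le_add_left 1 _
      have hbn : b.val + 1 ≤ n := b.isLt
      have hc1 : 1 ≤ c.val + 1 := Nat.le_add_left 1 _
      have hcn : c.val + 1 ≤ n := c.isLt
      rw [hssFF, hbrXXf _ _ hb1 hbn hc1 hcn, hbrXXf _ _ ha1 han hb1 hbn,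
        hbrXXf _ _ hc1 hcn ha1 han]
      simp only [hωsubr, one_mul]
      split_ifs <;>
        (try simp (disch := omega) only [hω0r, hωXX, sub_zero, zero_sub, sub_self,
          add_zero, zero_add, neg_zero, neg_neg]) <;>
        first
          | ring1
          | (exfalso; omega)
          | (split_ifs <;> first | ring1 | (exfalso; omega))
    · -- F F T
      rw [hsubF] at hx hy; rw [hsubT] at hz
      refine cocy _ _ _ _ _ _ ?_ x hx y hy z hz
      rintro _ ⟨a, rfl⟩ _ ⟨b, rfl⟩ _ ⟨c, rfl⟩
      have ha1 : 1 ≤ a.val + 1 := Nat.le_add_left 1 _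
      have han : a.val + 1 ≤ n := a.isLt
      have hb1 : 1 ≤ b.val + 1 := Nat.le_add_left 1 _
      have hbn : b.val + 1 ≤ n := b.isLt
      have hc1 : 1 ≤ c.val + 1 := Nat.le_add_left 1 _
      have hcm : c.val + 1 ≤ m := c.isLt
      rw [hssFF, hssFT, hssTF, hbrXYf _ _ hb1 hbn hc1 hcm, hbrXXf _ _ ha1 han hb1 hbn,
        hbrYXf _ _ ha1 han hc1 hcm]
      simp only [hωsubr, hωnegr, one_mul]
      split_ifs <;>
        (try simp (disch := omega) only [hω0r, hωXY, hωYX, hωXX, hωYY, sub_zero, zero_sub,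
          sub_self, add_zero, zero_add, neg_zero, neg_neg]) <;>
        first
          | ring1
          | (exfalso; omega)
          | (split_ifs <;> first | ring1 | (exfalso; omega))
    · -- F T F
      rw [hsubF] at hx hz; rw [hsubT] at hy
      refine cocy _ _ _ _ _ _ ?_ x hx y hy z hz
      rintro _ ⟨a, rfl⟩ _ ⟨b, rfl⟩ _ ⟨c, rfl⟩
      have ha1 : 1 ≤ a.val + 1 := Nat.le_add_left 1 _
      have han : a.val + 1 ≤ n := a.isLt
      have hb1 : 1 ≤ b.val + 1 := Nat.le_add_left 1 _
      have hbm : b.val + 1 ≤ m := b.isLt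
      have hc1 : 1 ≤ c.val + 1 := Nat.le_add_left 1 _
      have hcn : c.val + 1 ≤ n := c.isLt
      rw [hssFF, hssFT, hssTF, hbrYXf _ _ hc1 hcn hb1 hbm, hbrXYf _ _ ha1 han hb1 hbm,
        hbrXXf _ _ hc1 hcn ha1 han]
      simp only [hωsubr, hωnegr, one_mul]
      split_ifs <;>
        (try simp (disch := omega) only [hω0r, hωXY, hωYX, hωXX, hωYY, sub_zero, zero_sub,
          sub_self, add_zero, zero_add, neg_zero, neg_neg]) <;>
        first
          | ring1
          | (exfalso; omega)
          | (split_ifs <;> first | ring1 | (exfalso; omega))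
    · -- F T T
      rw [hsubF] at hx; rw [hsubT] at hy hz
      refine cocy _ _ _ _ _ _ ?_ x hx y hy z hz
      rintro _ ⟨a, rfl⟩ _ ⟨b, rfl⟩ _ ⟨c, rfl⟩
      have ha1 : 1 ≤ a.val + 1 := Nat.le_add_left 1 _
      have han : a.val + 1 ≤ n := a.isLt
      have hb1 : 1 ≤ b.val + 1 := Nat.le_add_left 1 _
      have hbm : b.val + 1 ≤ m := b.isLt
      have hc1 : 1 ≤ c.val + 1 := Nat.le_add_left 1 _
      have hcm : c.val + 1 ≤ m := c.isLt
      rw [hssFT, hssTT, hssTF,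
        hbrYY _ _ hb1 hbm hc1 hcm,
        hbrXYf _ _ ha1 han hb1 hbm,
        hbrYXf _ _ ha1 han hc1 hcm]
      simp only [hωsubr, hωnegr, one_mul, hω0r]
      split_ifs <;>
        (try simp (disch := omega) only [hω0r, hωXY, hωYX, hωXX, hωYY, sub_zero, zero_sub,
          sub_self, add_zero, zero_add, neg_zero, neg_neg]) <;>
        first
          | ring1
          | (exfalso; omega)
          | (split_ifs <;> first | ring1 | (exfalso; omega))
    · -- T F F
      rw [hsubT] at hx; rw [hsubF] at hy hz
      refine cocy _ _ _ _ _ _ ?_ x hx y hy z hz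
      rintro _ ⟨a, rfl⟩ _ ⟨b, rfl⟩ _ ⟨c, rfl⟩
      have ha1 : 1 ≤ a.val + 1 := Nat.le_add_left 1 _
      have ham : a.val + 1 ≤ m := a.isLt
      have hb1 : 1 ≤ b.val + 1 := Nat.le_add_left 1 _
      have hbn : b.val + 1 ≤ n := b.isLt
      have hc1 : 1 ≤ c.val + 1 := Nat.le_add_left 1 _
      have hcn : c.val + 1 ≤ n := c.isLt
      rw [hssFF, hssFT, hssTF, hbrXXf _ _ hb1 hbn hc1 hcn,
        hbrYXf _ _ hb1 hbn ha1 ham,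
        hbrXYf _ _ hc1 hcn ha1 ham]
      simp only [hωsubr, hωnegr, one_mul]
      split_ifs <;>
        (try simp (disch := omega) only [hω0r, hωXY, hωYX, hωXX, hωYY, sub_zero, zero_sub,
          sub_self, add_zero, zero_add, neg_zero, neg_neg]) <;>
        first
          | ring1
          | (exfalso; omega)
          | (split_ifs <;> first | ring1 | (exfalso; omega))
    · -- T F T
      rw [hsubT] at hx hz; rw [hsubF] at hy
      refine cocy _ _ _ _ _ _ ?_ x hx y hy z hz
      rintro _ ⟨a, rfl⟩ _ ⟨b, rfl⟩ _ ⟨c, rfl⟩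
      have ha1 : 1 ≤ a.val + 1 := Nat.le_add_left 1 _
      have ham : a.val + 1 ≤ m := a.isLt
      have hb1 : 1 ≤ b.val + 1 := Nat.le_add_left 1 _
      have hbn : b.val + 1 ≤ n := b.isLt
      have hc1 : 1 ≤ c.val + 1 := Nat.le_add_left 1 _
      have hcm : c.val + 1 ≤ m := c.isLt
      rw [hssFT, hssTT, hssTF,
        hbrXYf _ _ hb1 hbn hc1 hcm,
        hbrYXf _ _ hb1 hbn ha1 ham,
        hbrYY _ _ hc1 hcm ha1 ham]
      simp only [hωsubr, hωnegr, one_mul, hω0r]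
      split_ifs <;>
        (try simp (disch := omega) only [hω0r, hωXY, hωYX, hωXX, hωYY, sub_zero, zero_sub,
          sub_self, add_zero, zero_add, neg_zero, neg_neg]) <;>
        first
          | ring1
          | (exfalso; omega)
          | (split_ifs <;> first | ring1 | (exfalso; omega))
    · -- T T F
      rw [hsubT] at hx hy; rw [hsubF] at hz
      refine cocy _ _ _ _ _ _ ?_ x hx y hy z hz
      rintro _ ⟨a, rfl⟩ _ ⟨b, rfl⟩ _ ⟨c, rfl⟩
      have ha1 : 1 ≤ a.val + 1 := Nat.le_add_left 1 _
      have ham : a.val + 1 ≤ m := a.isLt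
      have hb1 : 1 ≤ b.val + 1 := Nat.le_add_left 1 _
      have hbm : b.val + 1 ≤ m := b.isLt
      have hc1 : 1 ≤ c.val + 1 := Nat.le_add_left 1 _
      have hcn : c.val + 1 ≤ n := c.isLt
      rw [hssFT, hssTT, hssTF,
        hbrYXf _ _ hc1 hcn hb1 hbm,
        hbrYY _ _ ha1 ham hb1 hbm,
        hbrXYf _ _ hc1 hcn ha1 ham]
      simp only [hωsubr, hωnegr, one_mul, hω0r]
      split_ifs <;>
        (try simp (disch := omega) only [hω0r, hωXY, hωYX, hωXX, hωYY, sub_zero, zero_sub,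
          sub_self, add_zero, zero_add, neg_zero, neg_neg]) <;>
        first
          | ring1
          | (exfalso; omega)
          | (split_ifs <;> first | ring1 | (exfalso; omega))
    · -- T T T
      rw [hsubT] at hx hy hz
      refine cocy _ _ _ _ _ _ ?_ x hx y hy z hz
      rintro _ ⟨a, rfl⟩ _ ⟨b, rfl⟩ _ ⟨c, rfl⟩
      have ha1 : 1 ≤ a.val + 1 := Nat.le_add_left 1 _
      have ham : a.val + 1 ≤ m := a.isLt
      have hb1 : 1 ≤ b.val + 1 := Nat.le_add_left 1 _
      have hbm : b.val + 1 ≤ m := b.isLt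
      have hc1 : 1 ≤ c.val + 1 := Nat.le_add_left 1 _
      have hcm : c.val + 1 ≤ m := c.isLt
      rw [hbrYY _ _ hb1 hbm hc1 hcm, hbrYY _ _ ha1 ham hb1 hbm, hbrYY _ _ hc1 hcm ha1 ham]
      simp only [hω0r]
      ring
  -- nondegeneracy
  have keyrow : ∀ (x : V) (q : Fin n ⊕ Fin m),
      ω x (B q) = ∑ p', cmat K n m p' q * B.repr x p' := by
    intro x q
    simp only [hωdef, Module.Basis.repr_self]
    refine Finset.sum_congr rfl fun p' _ => ?_
    rw [Finset.sum_eq_single q]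
    · simp
    · intro b _ hb; simp [Finsupp.single_eq_of_ne hb]
    · intro h; exact absurd (Finset.mem_univ _) h
  have hNondeg : IsNondegForm K V ω := by
    intro x hx
    have hrep : ∀ p, B.repr x p = 0 := by
      intro p
      cases p with
      | inl a =>
        have hq := hx (B (Sum.inl ⟨n - 1 - a.val, by omega⟩))
        rw [keyrow, Finset.sum_eq_single (Sum.inl a)] at hq
        · simp only [cmat, Fin.val_mk] at hq
          rw [if_pos (by have := a.isLt; omega)] at hq
          rcases mul_eq_zero.mp hq with h | h
          · exfalso; revert h; split_ifs <;> norm_num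
          · exact h
        · intro b _ hb
          cases b with
          | inl a' =>
            have hne : a'.val ≠ a.val := fun hh => hb (congrArg Sum.inl (Fin.ext hh))
            simp only [cmat, Fin.val_mk]
            rw [if_neg (by have := a.isLt; omega)]
            ring
          | inr b' => simp only [cmat]; ring
        · intro h; exact absurd (Finset.mem_univ _) h
      | inr a =>
        have hq := hx (B (Sum.inr ⟨m - 1 - a.val, by omega⟩))
        rw [keyrow, Finset.sum_eq_single (Sum.inr a)] at hq
        · simp only [cmat, Fin.val_mk] at hq
          rw [if_pos (by have := a.isLt; omega)] at hq
          rcases mul_eq_zero.mp hq with h | h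
          · exfalso; revert h; split_ifs <;> norm_num
          · exact h
        · intro b _ hb
          cases b with
          | inr a' =>
            have hne : a'.val ≠ a.val := fun hh => hb (congrArg Sum.inr (Fin.ext hh))
            simp only [cmat, Fin.val_mk]
            rw [if_neg (by have := a.isLt; omega)]
            ring
          | inl b' => simp only [cmat]; ring
        · intro h; exact absurd (Finset.mem_univ _) h
    have hz : B.repr x = 0 := Finsupp.ext hrep
    exact B.repr.injective (by rw [hz, map_zero])
  exact ⟨ω, hωbil, hClosed, hSkew, hNondeg, hEven⟩
end
end

section
/- Let n ≥ 4 be even and let λ, μ ∈ 𝕂 with λμ ≠ 0. The bilinear form ω on the filiform Lie superalgebra L^{n,n−2} determined (together with anti-symmetry, i.e. ω(X_n,X₁) = -λ and ω(Y_{n−i},X_i) = -ω(X_i,Y_{n−i})) by ω(X₁,X_n) = λ, ω(X_i,Y_{n−i}) = −(−1)^i μ for 2 ≤ i ≤ n−1, and ω = 0 on all other pairs of basis vectors, is a closed anti-symmetric non-degenerate bilinear form on L^{n,n−2} (it is non-homogeneous: neither even nor odd). -/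
noncomputable section

section Red

variable {K V : Type*} [Field K] [AddCommGroup V] [Module K V]

theorem red1 (g : V → K) (hadd : ∀ x y, g (x + y) = g x + g y)
    (hsmul : ∀ (c : K) (x : V), g (c • x) = c * g x)
    {s : Set V} (h : ∀ x ∈ s, g x = 0) : ∀ x ∈ Submodule.span K s, g x = 0 := by
  intro x hx
  induction hx using Submodule.span_induction with
  | mem a ha => exact h a ha
  | zero => simpa using hsmul 0 0
  | add a b _ _ iha ihb => rw [hadd, iha, ihb, add_zero]
  | smul c a _ iha => rw [hsmul, iha, mul_zero]

theorem red2 (g : V → V → K)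
    (h1 : ∀ x x' y, g (x + x') y = g x y + g x' y)
    (h2 : ∀ (c : K) (x y : V), g (c • x) y = c * g x y)
    (h3 : ∀ x y y', g x (y + y') = g x y + g x y')
    (h4 : ∀ (c : K) (x y : V), g x (c • y) = c * g x y)
    {s t : Set V} (h : ∀ x ∈ s, ∀ y ∈ t, g x y = 0) :
    ∀ x ∈ Submodule.span K s, ∀ y ∈ Submodule.span K t, g x y = 0 := by
  have step : ∀ x ∈ s, ∀ y ∈ Submodule.span K t, g x y = 0 := fun x hx =>
    red1 (g x) (h3 x) (fun c y => h4 c x y) (h x hx)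
  intro x hx y hy
  exact red1 (fun x => g x y) (fun a b => h1 a b y) (fun c a => h2 c a y)
    (fun a ha => step a ha y hy) x hx

theorem red3 (F : V → V → V → K)
    (h1 : ∀ x x' y z, F (x + x') y z = F x y z + F x' y z)
    (h2 : ∀ (c : K) (x y z : V), F (c • x) y z = c * F x y z)
    (h3 : ∀ x y y' z, F x (y + y') z = F x y z + F x y' z)
    (h4 : ∀ (c : K) (x y z : V), F x (c • y) z = c * F x y z)
    (h5 : ∀ x y z z', F x y (z + z') = F x y z + F x y z')
    (h6 : ∀ (c : K) (x y z : V), F x y (c • z) = c * F x y z)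
    {s t u : Set V} (h : ∀ x ∈ s, ∀ y ∈ t, ∀ z ∈ u, F x y z = 0) :
    ∀ x ∈ Submodule.span K s, ∀ y ∈ Submodule.span K t, ∀ z ∈ Submodule.span K u,
      F x y z = 0 := by
  have step : ∀ x ∈ s, ∀ y ∈ Submodule.span K t, ∀ z ∈ Submodule.span K u, F x y z = 0 :=
    fun x hx => red2 (F x) (h3 x) (fun c y z => h4 c x y z) (h5 x) (fun c y z => h6 c x y z)
      (h x hx)
  intro x hx y hy z hz
  exact red1 (fun x => F x y z) (fun a b => h1 a b y z) (fun c a => h2 c a y z)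
    (fun a ha => step a ha y hy z hz) x hx

end Red

set_option maxHeartbeats 3200000 in
/-- For `n ≥ 4` even, the form on the filiform Lie superalgebra
`L^{n,n-2}` determined by `ω(X₁,Xₙ) = λ`, `ω(X_i, Y_{n−i}) = −(−1)^i μ` for
`2 ≤ i ≤ n−1` (with `λμ ≠ 0`), anti-symmetry, and `ω = 0` on all other pairs of
basis vectors, is a closed anti-symmetric non-degenerate bilinear form
(non-homogeneous: neither even nor odd). -/
theorem filiform_nonhomogeneous_form
    (K V : Type*) [Field K] [AddCommGroup V] [Module K V]
    (hchar : ringChar K ≠ 2)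
    (n : ℕ) (hn : 4 ≤ n) (hneven : Even n)
    (sub : Bool → Submodule K V) (br : V → V → V)
    (hLie : IsLieSuperAlg K V sub br)
    (X Y : ℕ → V)
    (hXeven : ∀ i, 1 ≤ i → i ≤ n → X i ∈ sub false)
    (hYodd : ∀ j, 1 ≤ j → j ≤ n - 2 → Y j ∈ sub true)
    (hind : LinearIndependent K
      (Sum.elim (fun i : Fin n => X (i.val + 1)) (fun j : Fin (n - 2) => Y (j.val + 1))))
    (hspan : ⊤ ≤ Submodule.span K (Set.range
      (Sum.elim (fun i : Fin n => X (i.val + 1)) (fun j : Fin (n - 2) => Y (j.val + 1)))))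
    (hbrXX : ∀ i, 2 ≤ i → i ≤ n - 1 → br (X 1) (X i) = X (i + 1))
    (hbrX1n : br (X 1) (X n) = 0)
    (hbrX11 : br (X 1) (X 1) = 0)
    (hbrXX0 : ∀ i j, 2 ≤ i → i ≤ n → 2 ≤ j → j ≤ n → br (X i) (X j) = 0)
    (hbrXY : ∀ j, 1 ≤ j → j ≤ n - 3 → br (X 1) (Y j) = Y (j + 1))
    (hbrXYm : br (X 1) (Y (n - 2)) = 0)
    (hbrXY0 : ∀ i j, 2 ≤ i → i ≤ n → 1 ≤ j → j ≤ n - 2 → br (X i) (Y j) = 0)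
    (hbrYY : ∀ i j, 1 ≤ i → i ≤ n - 2 → 1 ≤ j → j ≤ n - 2 → br (Y i) (Y j) = 0)
    -- the form
    (lam mu : K) (hlm : lam * mu ≠ 0)
    (ω : V → V → K) (hωbil : IsBilinMap K V K ω)
    (hω1 : ω (X 1) (X n) = lam)
    (hω1' : ω (X n) (X 1) = -lam)
    (hωXX0 : ∀ i j, 1 ≤ i → i ≤ n → 1 ≤ j → j ≤ n →
      ¬(i = 1 ∧ j = n) → ¬(i = n ∧ j = 1) → ω (X i) (X j) = 0)
    (hω2 : ∀ i, 2 ≤ i → i ≤ n - 1 → ω (X i) (Y (n - i)) = -((-1 : K) ^ i * mu))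
    (hωXY0 : ∀ i j, 1 ≤ i → i ≤ n → 1 ≤ j → j ≤ n - 2 →
      ¬(2 ≤ i ∧ i ≤ n - 1 ∧ j = n - i) → ω (X i) (Y j) = 0)
    (hωYX : ∀ i j, 1 ≤ i → i ≤ n → 1 ≤ j → j ≤ n - 2 → ω (Y j) (X i) = -ω (X i) (Y j))
    (hωYY : ∀ i j, 1 ≤ i → i ≤ n - 2 → 1 ≤ j → j ≤ n - 2 → ω (Y i) (Y j) = 0) :
    IsClosedForm K V sub br ω ∧ IsSuperSkew K V sub ω ∧ IsNondegForm K V ω ∧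
      ¬IsEvenForm K V sub ω ∧ ¬IsOddForm K V sub ω := by
  classical
  have hlam : lam ≠ 0 := fun h => hlm (by simp [h])
  have hmu : mu ≠ 0 := fun h => hlm (by simp [h])
  obtain ⟨ωa1, ωm1, ωa2, ωm2⟩ := hωbil
  obtain ⟨bra1, brm1, bra2, brm2⟩ := hLie.bilin
  have ωz2 : ∀ x : V, ω x 0 = 0 := fun x => by simpa using ωm2 0 x 0
  have ωn2 : ∀ x y : V, ω x (-y) = -ω x y := fun x y => by simpa using ωm2 (-1) x y
  -- antisymmetry specializations
  have brXXs : ∀ p q, 1 ≤ p → p ≤ n → 1 ≤ q → q ≤ n → br (X q) (X p) = -br (X p) (X q) := by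
    intro p q hp1 hpn hq1 hqn
    have := hLie.antisymm false false (X p) (hXeven p hp1 hpn) (X q) (hXeven q hq1 hqn)
    simpa [ssign] using this
  have brYXs : ∀ p q, 1 ≤ p → p ≤ n → 1 ≤ q → q ≤ n - 2 →
      br (Y q) (X p) = -br (X p) (Y q) := by
    intro p q hp1 hpn hq1 hqn
    have := hLie.antisymm false true (X p) (hXeven p hp1 hpn) (Y q) (hYodd q hq1 hqn)
    simpa [ssign] using this
  -- bracket formulas
  have brXXf : ∀ p q, 1 ≤ p → p ≤ n → 1 ≤ q → q ≤ n →
      br (X p) (X q) = (if p = 1 ∧ 2 ≤ q ∧ q ≤ n - 1 then X (q + 1) else 0)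
        - (if q = 1 ∧ 2 ≤ p ∧ p ≤ n - 1 then X (p + 1) else 0) := by
    intro p q hp1 hpn hq1 hqn
    split_ifs with h1 h2 h2
    · omega
    · obtain ⟨rfl, hq2, hq3⟩ := h1; rw [hbrXX q hq2 hq3, sub_zero]
    · obtain ⟨rfl, hp2, hp3⟩ := h2
      rw [brXXs 1 p (by omega) (by omega) hp1 hpn, hbrXX p hp2 hp3, zero_sub]
    · rw [sub_zero]
      have hcase : (p = 1 ∧ q = 1) ∨ (p = 1 ∧ q = n) ∨ (q = 1 ∧ p = n) ∨ (2 ≤ p ∧ 2 ≤ q) := by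
        omega
      rcases hcase with ⟨hp', hq'⟩ | ⟨hp', hq'⟩ | ⟨hq', hp'⟩ | ⟨hp2, hq2⟩
      · rw [hp', hq']; exact hbrX11
      · rw [hp', hq']; exact hbrX1n
      · rw [hq', hp', brXXs 1 n (by omega) (by omega) (by omega) le_rfl, hbrX1n, neg_zero]
      · exact hbrXX0 p q hp2 hpn hq2 hqn
  have brXYf : ∀ p q, 1 ≤ p → p ≤ n → 1 ≤ q → q ≤ n - 2 →
      br (X p) (Y q) = if p = 1 ∧ q ≤ n - 3 then Y (q + 1) else 0 := by
    intro p q hp1 hpn hq1 hqn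
    split_ifs with h1
    · obtain ⟨rfl, hq3⟩ := h1; exact hbrXY q hq1 hq3
    · have hcase : (p = 1 ∧ q = n - 2) ∨ 2 ≤ p := by omega
      rcases hcase with ⟨rfl, rfl⟩ | hp2
      · exact hbrXYm
      · exact hbrXY0 p q hp2 hpn hq1 hqn
  -- ω formulas
  have ωXXf : ∀ p q, 1 ≤ p → p ≤ n → 1 ≤ q → q ≤ n →
      ω (X p) (X q) = if p = 1 ∧ q = n then lam else if p = n ∧ q = 1 then -lam else 0 := by
    intro p q hp1 hpn hq1 hqn
    split_ifs with h1 h2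
    · obtain ⟨rfl, rfl⟩ := h1; exact hω1
    · obtain ⟨rfl, rfl⟩ := h2; exact hω1'
    · exact hωXX0 p q hp1 hpn hq1 hqn h1 h2
  have ωXYf : ∀ p q, 1 ≤ p → p ≤ n → 1 ≤ q → q ≤ n - 2 →
      ω (X p) (Y q) = if 2 ≤ p ∧ p ≤ n - 1 ∧ p + q = n then -((-1 : K) ^ p * mu) else 0 := by
    intro p q hp1 hpn hq1 hqn
    split_ifs with h1
    · obtain ⟨hp2, hp3, hpq⟩ := h1
      have hq : q = n - p := by omega
      subst hq; exact hω2 p hp2 hp3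
    · exact hωXY0 p q hp1 hpn hq1 hqn (by omega)
  -- term value formulas
  have T1f : ∀ a b c, 1 ≤ a → a ≤ n → 1 ≤ b → b ≤ n → 1 ≤ c → c ≤ n →
      ω (X a) (br (X b) (X c)) =
        (if a = 1 ∧ b = 1 ∧ c = n - 1 then lam else 0)
          - (if a = 1 ∧ c = 1 ∧ b = n - 1 then lam else 0) := by
    intro a b c ha1 han hb1 hbn hc1 hcn
    rw [brXXf b c hb1 hbn hc1 hcn]
    by_cases h1 : b = 1 ∧ 2 ≤ c ∧ c ≤ n - 1
    · rw [if_pos h1]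
      by_cases h2 : c = 1 ∧ 2 ≤ b ∧ b ≤ n - 1
      · omega
      · rw [if_neg h2, sub_zero, ωXXf a (c + 1) ha1 han (by omega) (by omega)]
        split_ifs <;> first | ring1 | omega
    · rw [if_neg h1]
      by_cases h2 : c = 1 ∧ 2 ≤ b ∧ b ≤ n - 1
      · rw [if_pos h2, zero_sub, ωn2, ωXXf a (b + 1) ha1 han (by omega) (by omega)]
        split_ifs <;> first | ring1 | omega
      · rw [if_neg h2, sub_zero, ωz2]
        split_ifs <;> first | ring1 | omega
  have P1f : ∀ a b c, 1 ≤ a → a ≤ n → 1 ≤ b → b ≤ n → 1 ≤ c → c ≤ n - 2 →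
      ω (X a) (br (X b) (Y c)) =
        if b = 1 ∧ 2 ≤ a ∧ a ≤ n - 1 ∧ a + c = n - 1 then -((-1 : K) ^ a * mu) else 0 := by
    intro a b c ha1 han hb1 hbn hc1 hcn
    rw [brXYf b c hb1 hbn hc1 hcn]
    by_cases h1 : b = 1 ∧ c ≤ n - 3
    · rw [if_pos h1, ωXYf a (c + 1) ha1 han (by omega) (by omega)]
      split_ifs <;> first | ring1 | omega
    · rw [if_neg h1, ωz2]
      split_ifs with h2
      · omega
      · rfl
  have P2f : ∀ a b c, 1 ≤ a → a ≤ n → 1 ≤ b → b ≤ n → 1 ≤ c → c ≤ n - 2 →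
      ω (Y c) (br (X a) (X b)) =
        (if a = 1 ∧ 2 ≤ b ∧ b ≤ n - 2 ∧ b + c = n - 1 then (-1 : K) ^ (b + 1) * mu else 0)
          + (if b = 1 ∧ 2 ≤ a ∧ a ≤ n - 2 ∧ a + c = n - 1 then (-1 : K) ^ a * mu else 0) := by
    intro a b c ha1 han hb1 hbn hc1 hcn
    rw [brXXf a b ha1 han hb1 hbn]
    by_cases h1 : a = 1 ∧ 2 ≤ b ∧ b ≤ n - 1
    · rw [if_pos h1]
      by_cases h2 : b = 1 ∧ 2 ≤ a ∧ a ≤ n - 1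
      · omega
      · rw [if_neg h2, sub_zero, hωYX (b + 1) c (by omega) (by omega) hc1 hcn,
          ωXYf (b + 1) c (by omega) (by omega) hc1 hcn]
        split_ifs <;> first | ring1 | omega
    · rw [if_neg h1]
      by_cases h2 : b = 1 ∧ 2 ≤ a ∧ a ≤ n - 1
      · rw [if_pos h2, zero_sub, ωn2, hωYX (a + 1) c (by omega) (by omega) hc1 hcn,
          ωXYf (a + 1) c (by omega) (by omega) hc1 hcn]
        split_ifs <;> first | ring1 | omega
      · rw [if_neg h2, sub_zero, ωz2]
        split_ifs <;> first | ring1 | omega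
  have P3f : ∀ a b c, 1 ≤ a → a ≤ n → 1 ≤ b → b ≤ n → 1 ≤ c → c ≤ n - 2 →
      ω (X b) (br (Y c) (X a)) =
        if a = 1 ∧ 2 ≤ b ∧ b ≤ n - 1 ∧ b + c = n - 1 then (-1 : K) ^ b * mu else 0 := by
    intro a b c ha1 han hb1 hbn hc1 hcn
    rw [brYXs a c ha1 han hc1 hcn, ωn2, P1f b a c hb1 hbn ha1 han hc1 hcn]
    split_ifs <;> first | ring1 | omega
  have eee : ∀ a b c, 1 ≤ a → a ≤ n → 1 ≤ b → b ≤ n → 1 ≤ c → c ≤ n →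
      ω (X a) (br (X b) (X c)) + ω (X c) (br (X a) (X b)) + ω (X b) (br (X c) (X a)) = 0 := by
    intro a b c ha1 han hb1 hbn hc1 hcn
    rw [T1f a b c ha1 han hb1 hbn hc1 hcn, T1f c a b hc1 hcn ha1 han hb1 hbn,
      T1f b c a hb1 hbn hc1 hcn ha1 han]
    split_ifs <;> first | ring1 | omega
  have eeo : ∀ a b c, 1 ≤ a → a ≤ n → 1 ≤ b → b ≤ n → 1 ≤ c → c ≤ n - 2 →
      ω (X a) (br (X b) (Y c)) + ω (Y c) (br (X a) (X b)) + ω (X b) (br (Y c) (X a)) = 0 := by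
    intro a b c ha1 han hb1 hbn hc1 hcn
    rw [P1f a b c ha1 han hb1 hbn hc1 hcn, P2f a b c ha1 han hb1 hbn hc1 hcn,
      P3f a b c ha1 han hb1 hbn hc1 hcn]
    split_ifs <;> first | ring1 | omega
  -- identification of the homogeneous components as spans
  have hXle : Submodule.span K (Set.range fun i : Fin n => X (i.val + 1)) ≤ sub false := by
    rw [Submodule.span_le]; rintro v ⟨i, rfl⟩
    exact hXeven _ (by omega) (by have := i.isLt; omega)
  have hYle : Submodule.span K (Set.range fun j : Fin (n - 2) => Y (j.val + 1)) ≤ sub true := by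
    rw [Submodule.span_le]; rintro v ⟨j, rfl⟩
    exact hYodd _ (by omega) (by have := j.isLt; omega)
  have hsup : Submodule.span K (Set.range fun i : Fin n => X (i.val + 1))
      ⊔ Submodule.span K (Set.range fun j : Fin (n - 2) => Y (j.val + 1)) = ⊤ := by
    rw [← Submodule.span_union, ← Set.Sum.elim_range]
    exact eq_top_iff.mpr hspan
  have hdisj : sub false ⊓ sub true = ⊥ := hLie.compl.inf_eq_bot
  have hmem : ∀ b : Bool, sub b = Submodule.span K
      (Bool.rec (Set.range fun i : Fin n => X (i.val + 1))
        (Set.range fun j : Fin (n - 2) => Y (j.val + 1)) b) := by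
    intro b
    cases b
    · refine le_antisymm ?_ hXle
      intro v hv
      have hvtop : v ∈ Submodule.span K (Set.range fun i : Fin n => X (i.val + 1))
          ⊔ Submodule.span K (Set.range fun j : Fin (n - 2) => Y (j.val + 1)) := by
        rw [hsup]; trivial
      obtain ⟨p, hp, q, hq, rfl⟩ := Submodule.mem_sup.mp hvtop
      have hq0 : q ∈ sub false ⊓ sub true := by
        refine ⟨?_, hYle hq⟩
        have h1 : p ∈ sub false := hXle hp
        have h2 := (sub false).sub_mem hv h1
        simpa using h2
      rw [hdisj, Submodule.mem_bot] at hq0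
      rw [hq0, add_zero]; exact hp
    · refine le_antisymm ?_ hYle
      intro v hv
      have hvtop : v ∈ Submodule.span K (Set.range fun i : Fin n => X (i.val + 1))
          ⊔ Submodule.span K (Set.range fun j : Fin (n - 2) => Y (j.val + 1)) := by
        rw [hsup]; trivial
      obtain ⟨p, hp, q, hq, rfl⟩ := Submodule.mem_sup.mp hvtop
      have hp0 : p ∈ sub false ⊓ sub true := by
        refine ⟨hXle hp, ?_⟩
        have h1 : q ∈ sub true := hYle hq
        have h2 := (sub true).sub_mem hv h1
        simpa using h2
      rw [hdisj, Submodule.mem_bot] at hp0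
      rw [hp0, zero_add]; exact hq
  -- index bound helpers
  have hbX : ∀ a : Fin n, 1 ≤ a.val + 1 ∧ a.val + 1 ≤ n := fun a => ⟨by omega, by
    have := a.isLt; omega⟩
  have hbY : ∀ a : Fin (n - 2), 1 ≤ a.val + 1 ∧ a.val + 1 ≤ n - 2 := fun a => ⟨by omega, by
    have := a.isLt; omega⟩
  have sff : ssign K false false = 1 := rfl
  have sft : ssign K false true = 1 := rfl
  have stf : ssign K true false = 1 := rfl
  have stt : ssign K true true = -1 := rfl
  have ωYgen : ∀ u, 1 ≤ u → u ≤ n - 2 → ∀ p q, 1 ≤ p → p ≤ n → 1 ≤ q → q ≤ n - 2 →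
      ω (Y u) (br (X p) (Y q)) = 0 := by
    intro u hu1 hu2 p q hp1 hpn hq1 hqn
    rw [brXYf p q hp1 hpn hq1 hqn]
    split_ifs with h
    · exact hωYY u (q + 1) hu1 hu2 (by omega) (by omega)
    · exact ωz2 _
  refine ⟨?_, ?_, ?_, ?_, ?_⟩
  · -- closedness
    intro i j k x hx y hy z hz
    refine red3 (F := fun x y z => ssign K i k * ω x (br y z) + ssign K k j * ω z (br x y) +
        ssign K j i * ω y (br z x)) ?_ ?_ ?_ ?_ ?_ ?_ ?_ x ((hmem i) ▸ hx) y ((hmem j) ▸ hy)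
      z ((hmem k) ▸ hz)
    · intro x x' y z; simp only [ωa1, ωa2, bra1, bra2, smul_eq_mul]; ring
    · intro c x y z; simp only [ωm1, ωm2, brm1, brm2, smul_eq_mul]; ring
    · intro x y y' z; simp only [ωa1, ωa2, bra1, bra2, smul_eq_mul]; ring
    · intro c x y z; simp only [ωm1, ωm2, brm1, brm2, smul_eq_mul]; ring
    · intro x y z z'; simp only [ωa1, ωa2, bra1, bra2, smul_eq_mul]; ring
    · intro c x y z; simp only [ωm1, ωm2, brm1, brm2, smul_eq_mul]; ring
    · cases i <;> cases j <;> cases k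
      · rintro _ ⟨a, rfl⟩ _ ⟨b, rfl⟩ _ ⟨c, rfl⟩
        simp only [sff, one_mul]
        exact eee _ _ _ (hbX a).1 (hbX a).2 (hbX b).1 (hbX b).2 (hbX c).1 (hbX c).2
      · rintro _ ⟨a, rfl⟩ _ ⟨b, rfl⟩ _ ⟨c, rfl⟩
        simp only [sff, sft, stf, one_mul]
        exact eeo _ _ _ (hbX a).1 (hbX a).2 (hbX b).1 (hbX b).2 (hbY c).1 (hbY c).2
      · rintro _ ⟨a, rfl⟩ _ ⟨b, rfl⟩ _ ⟨c, rfl⟩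
        simp only [sff, sft, stf, one_mul]
        have h := eeo (c.val + 1) (a.val + 1) (b.val + 1) (hbX c).1 (hbX c).2 (hbX a).1
          (hbX a).2 (hbY b).1 (hbY b).2
        linear_combination h
      · rintro _ ⟨a, rfl⟩ _ ⟨b, rfl⟩ _ ⟨c, rfl⟩
        simp only [sft, stf, stt, one_mul, neg_one_mul]
        rw [hbrYY (b.val + 1) (c.val + 1) (hbY b).1 (hbY b).2 (hbY c).1 (hbY c).2, ωz2,
          ωYgen (c.val + 1) (hbY c).1 (hbY c).2 (a.val + 1) (b.val + 1) (hbX a).1 (hbX a).2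
            (hbY b).1 (hbY b).2,
          brYXs (a.val + 1) (c.val + 1) (hbX a).1 (hbX a).2 (hbY c).1 (hbY c).2, ωn2,
          ωYgen (b.val + 1) (hbY b).1 (hbY b).2 (a.val + 1) (c.val + 1) (hbX a).1 (hbX a).2
            (hbY c).1 (hbY c).2]
        ring
      · rintro _ ⟨a, rfl⟩ _ ⟨b, rfl⟩ _ ⟨c, rfl⟩
        simp only [sff, sft, stf, one_mul]
        have h := eeo (b.val + 1) (c.val + 1) (a.val + 1) (hbX b).1 (hbX b).2 (hbX c).1
          (hbX c).2 (hbY a).1 (hbY a).2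
        linear_combination h
      · rintro _ ⟨a, rfl⟩ _ ⟨b, rfl⟩ _ ⟨c, rfl⟩
        simp only [sft, stf, stt, one_mul, neg_one_mul]
        rw [ωYgen (a.val + 1) (hbY a).1 (hbY a).2 (b.val + 1) (c.val + 1) (hbX b).1 (hbX b).2
            (hbY c).1 (hbY c).2,
          brYXs (b.val + 1) (a.val + 1) (hbX b).1 (hbX b).2 (hbY a).1 (hbY a).2, ωn2,
          ωYgen (c.val + 1) (hbY c).1 (hbY c).2 (b.val + 1) (a.val + 1) (hbX b).1 (hbX b).2
            (hbY a).1 (hbY a).2,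
          hbrYY (c.val + 1) (a.val + 1) (hbY c).1 (hbY c).2 (hbY a).1 (hbY a).2, ωz2]
        ring
      · rintro _ ⟨a, rfl⟩ _ ⟨b, rfl⟩ _ ⟨c, rfl⟩
        simp only [sft, stf, stt, one_mul, neg_one_mul]
        rw [brYXs (c.val + 1) (b.val + 1) (hbX c).1 (hbX c).2 (hbY b).1 (hbY b).2, ωn2,
          ωYgen (a.val + 1) (hbY a).1 (hbY a).2 (c.val + 1) (b.val + 1) (hbX c).1 (hbX c).2
            (hbY b).1 (hbY b).2,
          hbrYY (a.val + 1) (b.val + 1) (hbY a).1 (hbY a).2 (hbY b).1 (hbY b).2, ωz2,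
          ωYgen (b.val + 1) (hbY b).1 (hbY b).2 (c.val + 1) (a.val + 1) (hbX c).1 (hbX c).2
            (hbY a).1 (hbY a).2]
        ring
      · rintro _ ⟨a, rfl⟩ _ ⟨b, rfl⟩ _ ⟨c, rfl⟩
        simp only [stt, neg_one_mul]
        rw [hbrYY (b.val + 1) (c.val + 1) (hbY b).1 (hbY b).2 (hbY c).1 (hbY c).2,
          hbrYY (a.val + 1) (b.val + 1) (hbY a).1 (hbY a).2 (hbY b).1 (hbY b).2,
          hbrYY (c.val + 1) (a.val + 1) (hbY c).1 (hbY c).2 (hbY a).1 (hbY a).2,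
          ωz2, ωz2, ωz2]
        ring
  · -- super skew
    intro i j x hx y hy
    have key : ω y x + ssign K i j * ω x y = 0 := by
      refine red2 (g := fun x y => ω y x + ssign K i j * ω x y) ?_ ?_ ?_ ?_ ?_ x
        ((hmem i) ▸ hx) y ((hmem j) ▸ hy)
      · intro x x' y; simp only [ωa1, ωa2]; ring
      · intro c x y; simp only [ωm1, ωm2, smul_eq_mul]; ring
      · intro x y y'; simp only [ωa1, ωa2]; ring
      · intro c x y; simp only [ωm1, ωm2, smul_eq_mul]; ring
      · cases i <;> cases j
        · rintro _ ⟨a, rfl⟩ _ ⟨b, rfl⟩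
          simp only [sff, one_mul]
          rw [ωXXf (a.val + 1) (b.val + 1) (hbX a).1 (hbX a).2 (hbX b).1 (hbX b).2,
            ωXXf (b.val + 1) (a.val + 1) (hbX b).1 (hbX b).2 (hbX a).1 (hbX a).2]
          split_ifs <;> first | ring1 | omega
        · rintro _ ⟨a, rfl⟩ _ ⟨b, rfl⟩
          simp only [sft, one_mul]
          rw [hωYX (a.val + 1) (b.val + 1) (hbX a).1 (hbX a).2 (hbY b).1 (hbY b).2]
          ring
        · rintro _ ⟨a, rfl⟩ _ ⟨b, rfl⟩
          simp only [stf, one_mul]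
          rw [hωYX (b.val + 1) (a.val + 1) (hbX b).1 (hbX b).2 (hbY a).1 (hbY a).2]
          ring
        · rintro _ ⟨a, rfl⟩ _ ⟨b, rfl⟩
          simp only [stt, neg_one_mul]
          rw [hωYY (a.val + 1) (b.val + 1) (hbY a).1 (hbY a).2 (hbY b).1 (hbY b).2,
            hωYY (b.val + 1) (a.val + 1) (hbY b).1 (hbY b).2 (hbY a).1 (hbY a).2]
          ring
    linear_combination key
  · -- nondegeneracy
    intro x hx
    let B : Module.Basis (Fin n ⊕ Fin (n - 2)) K V := Module.Basis.mk hind hspan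
    have hB1 : ∀ a : Fin n, B (Sum.inl a) = X (a.val + 1) := fun a => Module.Basis.mk_apply hind hspan (Sum.inl a)
    have hB2 : ∀ j : Fin (n - 2), B (Sum.inr j) = Y (j.val + 1) := fun j =>
      Module.Basis.mk_apply hind hspan (Sum.inr j)
    let Ω : V →ₗ[K] V →ₗ[K] K := LinearMap.mk₂ K ω ωa1 ωm1 ωa2 ωm2
    have hexp : ∀ v, (∑ i0 : Fin n ⊕ Fin (n - 2), B.repr x i0 • ω (B i0) v) = 0 := by
      intro v
      have e1 : (∑ i0 : Fin n ⊕ Fin (n - 2), B.repr x i0 • B i0) = x := B.sum_repr x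
      calc (∑ i0 : Fin n ⊕ Fin (n - 2), B.repr x i0 • ω (B i0) v)
          = Ω (∑ i0 : Fin n ⊕ Fin (n - 2), B.repr x i0 • B i0) v := by
            rw [map_sum, LinearMap.sum_apply]
            exact Finset.sum_congr rfl fun i0 _ => by rw [map_smul, LinearMap.smul_apply]; rfl
        _ = 0 := by rw [e1]; exact hx v
    have hcoef : ∀ (i0 : Fin n ⊕ Fin (n - 2)) (v : V) (κ : K), κ ≠ 0 → ω (B i0) v = κ →
        (∀ i1, i1 ≠ i0 → ω (B i1) v = 0) → B.repr x i0 = 0 := by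
      intro i0 v κ hκ hdiag hoff
      have h := hexp v
      rw [Finset.sum_eq_single i0 (fun i1 _ hne => by rw [hoff i1 hne, smul_zero])
        (fun habs => absurd (Finset.mem_univ i0) habs), hdiag] at h
      rcases smul_eq_zero.mp h with h' | h'
      · exact h'
      · exact absurd h' hκ
    have hall : ∀ i0 : Fin n ⊕ Fin (n - 2), B.repr x i0 = 0 := by
      rintro (a | j)
      · have haLt := a.isLt
        by_cases hp1 : a.val + 1 = 1
        · refine hcoef _ (X n) lam hlam ?_ ?_
          · rw [hB1 a, hp1]; exact hω1
          · rintro (a' | j') hne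
            · have := a'.isLt
              rw [hB1 a', ωXXf (a'.val + 1) n (by omega) (by omega) (by omega) le_rfl]
              split_ifs with h1 h2
              · exfalso; exact hne (by rw [show a' = a from Fin.ext (by omega)])
              · omega
              · rfl
            · have := j'.isLt
              rw [hB2 j', hωYX n (j'.val + 1) (by omega) le_rfl (by omega) (by omega),
                ωXYf n (j'.val + 1) (by omega) le_rfl (by omega) (by omega),
                if_neg (by omega), neg_zero]
        · by_cases hpn : a.val + 1 = n
          · refine hcoef _ (X 1) (-lam) (neg_ne_zero.mpr hlam) ?_ ?_
            · rw [hB1 a, hpn]; exact hω1'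
            · rintro (a' | j') hne
              · have := a'.isLt
                rw [hB1 a', ωXXf (a'.val + 1) 1 (by omega) (by omega) (by omega) (by omega)]
                split_ifs with h1 h2
                · omega
                · exfalso; exact hne (by rw [show a' = a from Fin.ext (by omega)])
                · rfl
              · have := j'.isLt
                rw [hB2 j', hωYX 1 (j'.val + 1) (by omega) (by omega) (by omega) (by omega),
                  ωXYf 1 (j'.val + 1) (by omega) (by omega) (by omega) (by omega),
                  if_neg (by omega), neg_zero]
          · refine hcoef _ (Y (n - (a.val + 1))) (-((-1 : K) ^ (a.val + 1) * mu))
              (neg_ne_zero.mpr (mul_ne_zero (pow_ne_zero _ (by norm_num)) hmu)) ?_ ?_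
            · rw [hB1 a]; exact hω2 (a.val + 1) (by omega) (by omega)
            · rintro (a' | j') hne
              · have := a'.isLt
                rw [hB1 a', ωXYf (a'.val + 1) (n - (a.val + 1)) (by omega) (by omega)
                  (by omega) (by omega)]
                split_ifs with h1
                · exfalso; exact hne (by rw [show a' = a from Fin.ext (by omega)])
                · rfl
              · have := j'.isLt
                rw [hB2 j']
                exact hωYY (j'.val + 1) (n - (a.val + 1)) (by omega) (by omega) (by omega)
                  (by omega)
      · have hjLt := j.isLt
        refine hcoef _ (X (n - (j.val + 1))) ((-1 : K) ^ (n - (j.val + 1)) * mu)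
          (mul_ne_zero (pow_ne_zero _ (by norm_num)) hmu) ?_ ?_
        · rw [hB2 j, hωYX (n - (j.val + 1)) (j.val + 1) (by omega) (by omega) (by omega)
            (by omega),
            ωXYf (n - (j.val + 1)) (j.val + 1) (by omega) (by omega) (by omega) (by omega),
            if_pos ⟨by omega, by omega, by omega⟩]
          ring
        · rintro (a' | j') hne
          · have := a'.isLt
            rw [hB1 a', ωXXf (a'.val + 1) (n - (j.val + 1)) (by omega) (by omega) (by omega)
              (by omega), if_neg (by omega), if_neg (by omega)]
          · have := j'.isLt
            rw [hB2 j', hωYX (n - (j.val + 1)) (j'.val + 1) (by omega) (by omega) (by omega)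
              (by omega),
              ωXYf (n - (j.val + 1)) (j'.val + 1) (by omega) (by omega) (by omega) (by omega),
              if_neg (fun hcon => hne (by rw [show j' = j from Fin.ext (by omega)])), neg_zero]
    have hrepr : B.repr x = 0 := Finsupp.ext hall
    exact (LinearEquiv.map_eq_zero_iff B.repr).mp hrepr
  · -- not even
    intro h
    have h1 := h (X 2) (Y (n - 2)) (Or.inl ⟨hXeven 2 (by omega) (by omega),
      hYodd (n - 2) (by omega) (by omega)⟩)
    have h2 := hω2 2 (by omega) (by omega)
    rw [h1] at h2
    apply hmu
    have h3 : ((-1 : K) ^ 2 * mu) = 0 := by linear_combination h2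
    simpa using h3
  · -- not odd
    intro h
    have h1 := h false (X 1) (hXeven 1 (by omega) (by omega)) (X n) (hXeven n (by omega) le_rfl)
    rw [hω1] at h1
    exact hlam h1
end
end

section
/- Let (𝔞,ω_𝔞) be an orthosymplectic quasi-Frobenius Lie superalgebra over 𝕂, let D be an odd derivation of 𝔞 with adjoint D*, and suppose there exists an even element a₀ ∈ 𝔞 such that ω_𝔞((D∘D − D*∘D*)(a), b) = ω_𝔞(a₀, [a,b]_𝔞) for all a,b ∈ 𝔞, D∘D = ad_{a₀} (i.e. D(D(a)) = [a₀,a]_𝔞 for all a), and D(a₀) = 0. Then on 𝔤 = 𝕂x ⊕ 𝔞 ⊕ 𝕂x*, with x and x* odd, the brackets [x,y]_𝔤 = 0 for all y ∈ 𝔤, [a,b]_𝔤 = [a,b]_𝔞 + (ω_𝔞(D(a),b) + (−1)^{p(a)}ω_𝔞(a,D(b)))·x, [x*,x*]_𝔤 = 2a₀, and [x*,a]_𝔤 = D(a) − ω_𝔞(a,a₀)·x for a,b ∈ 𝔞, define a Lie superalgebra structure; moreover the even bilinear form ω_𝔤 determined by ω_𝔤|_{𝔞×𝔞} = ω_𝔞,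 ω_𝔤(𝔞,x) = ω_𝔤(𝔞,x*) = 0, ω_𝔤(x*,x) = 1, and ω_𝔤(x,x) = ω_𝔤(x*,x*) = 0 is a closed anti-symmetric non-degenerate form, so (𝔤,ω_𝔤) is an orthosymplectic quasi-Frobenius Lie superalgebra. -/
noncomputable section

section DoubleExtension

variable (K A : Type*) [Field K] [AddCommGroup A] [Module K A]

/-- The grading of the double extension `𝕂x ⊕ 𝔞 ⊕ 𝕂x*` of a graded space `𝔞`,
in coordinates `(s, a, t) = s·x + a + t·x*`, where `x` has parity `xpar` and
`x*` has parity `epar`. -/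
def dblSub (subA : Bool → Submodule K A) (xpar epar : Bool) :
    Bool → Submodule K (K × A × K) := fun i =>
  ((if i = xpar then (⊤ : Submodule K K) else ⊥)).prod
    ((subA i).prod (if i = epar then (⊤ : Submodule K K) else ⊥))

/-- The bracket of the `𝒟`-even double extension (orthosymplectic case), in coordinates
`(s, a, t) = s·x + a + t·x*`:  `[x, 𝕂x ⊕ 𝔞] = 0`, `[x,x*] = λx`,
`[a,b] = [a,b]_𝔞 + ω_𝔞(D a + D* a, b)·x`, `[x*,a] = D a + ω_𝔞(Z, a)·x`. -/
def dblBrEvenO (brA : A → A → A) (ωA : A → A → K) (D Ds : A → A) (lam : K) (Z : A) :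
    K × A × K → K × A × K → K × A × K := fun p q =>
  (p.1 * q.2.2 * lam - p.2.2 * q.1 * lam + ωA (D p.2.1 + Ds p.2.1) q.2.1
      + p.2.2 * ωA Z q.2.1 - q.2.2 * ωA Z p.2.1,
   brA p.2.1 q.2.1 + p.2.2 • D q.2.1 - q.2.2 • D p.2.1,
   0)

/-- The bracket of the `𝒟`-even double extension (periplectic case), in coordinates
`(s, a, t) = s·x + a + t·e`:  `[x, 𝕂x ⊕ 𝔞] = 0`, `[x,e] = λx`,
`[a,b] = [a,b]_𝔞 + (ω_𝔞(D a, b) + ω_𝔞(a, D b))·x`, `[e,a] = D a + ω_𝔞(Z, a)·x`. -/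
def dblBrEvenP (brA : A → A → A) (ωA : A → A → K) (D : A → A) (lam : K) (Z : A) :
    K × A × K → K × A × K → K × A × K := fun p q =>
  (p.1 * q.2.2 * lam - p.2.2 * q.1 * lam + ωA (D p.2.1) q.2.1 + ωA p.2.1 (D q.2.1)
      + p.2.2 * ωA Z q.2.1 - q.2.2 * ωA Z p.2.1,
   brA p.2.1 q.2.1 + p.2.2 • D q.2.1 - q.2.2 • D p.2.1,
   0)

/-- The form of a double extension when the two new generators do not have the same
odd parity: `ω|_{𝔞×𝔞} = ω_𝔞`, the new generators are isotropic and orthogonal to `𝔞`,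
and the pairing of the two new generators is `ω(x*, x) = 1`, `ω(x, x*) = −1`. -/
def dblFormMinus (ωA : A → A → K) : K × A × K → K × A × K → K :=
  fun p q => ωA p.2.1 q.2.1 + p.2.2 * q.1 - p.1 * q.2.2

/-- The form of a double extension when the two new generators are both odd:
`ω|_{𝔞×𝔞} = ω_𝔞`, the new generators are isotropic and orthogonal to `𝔞`, and
`ω(x*, x) = 1 = ω(x, x*)`. -/
def dblFormPlus (ωA : A → A → K) : K × A × K → K × A × K → K :=
  fun p q => ωA p.2.1 q.2.1 + p.2.2 * q.1 + p.1 * q.2.2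

end DoubleExtension

set_option maxHeartbeats 4000000

/-- The `𝒟`-odd double extension of an orthosymplectic quasi-Frobenius
Lie superalgebra `(𝔞, ω_𝔞)` by an odd derivation `𝒟` (with adjoint `𝒟*`) and an even
`a₀ ∈ 𝔞` with `𝒟² = ad_{a₀}`, `𝒟(a₀) = 0` and the coboundary condition, carries a Lie
superalgebra structure (with `x, x*` odd) on `𝕂x ⊕ 𝔞 ⊕ 𝕂x*` with the stated brackets,
and the stated even form is closed, anti-symmetric and non-degenerate, i.e. the result
is an orthosymplectic quasi-Frobenius Lie superalgebra. -/
theorem doddExtension_orthosymplectic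
    (K A : Type*) [Field K] [AddCommGroup A] [Module K A]
    (hchar : ringChar K ≠ 2)
    (subA : Bool → Submodule K A) (brA : A → A → A) (ωA : A → A → K)
    (hLie : IsLieSuperAlg K A subA brA)
    (hQF : IsQuasiFrobenius K A subA brA ωA)
    (hEven : IsEvenForm K A subA ωA)
    (D Ds : A → A)
    (hDadd : ∀ a b : A, D (a + b) = D a + D b)
    (hDsmul : ∀ (c : K) (a : A), D (c • a) = c • D a)
    (hDodd : ∀ i : Bool, ∀ a ∈ subA i, D a ∈ subA (!i))
    (hDder : ∀ i : Bool, ∀ f ∈ subA i, ∀ g : A,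
      D (brA f g) = brA (D f) g + ssign K i true • brA f (D g))
    (hDsadd : ∀ a b : A, Ds (a + b) = Ds a + Ds b)
    (hDssmul : ∀ (c : K) (a : A), Ds (c • a) = c • Ds a)
    (hDs : ∀ i : Bool, ∀ f ∈ subA i, ∀ g : A, ωA (D f) g = ssign K i true * ωA f (Ds g))
    (a₀ : A) (ha₀even : a₀ ∈ subA false)
    (hΩ : ∀ a b : A, ωA (D (D a) - Ds (Ds a)) b = ωA a₀ (brA a b))
    (hDD : ∀ a : A, D (D a) = brA a₀ a)
    (hDa₀ : D a₀ = 0) :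
    ∃ brG : K × A × K → K × A × K → K × A × K,
      IsLieSuperAlg K (K × A × K) (dblSub K A subA true true) brG
      -- the defining brackets: `x = (1,0,0)` and `x* = (0,0,1)` are odd,
      -- `[x, 𝔤] = 0`, `[a,b] = [a,b]_𝔞 + (ω_𝔞(𝒟a, b) + (−1)^{p(a)} ω_𝔞(a, 𝒟b))·x`,
      -- `[x*,x*] = 2a₀`, `[x*,a] = 𝒟a − ω_𝔞(a, a₀)·x`
      ∧ (∀ g : K × A × K, brG (1, 0, 0) g = 0)
      ∧ (∀ i : Bool, ∀ a ∈ subA i, ∀ b : A,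
          brG (0, a, 0) (0, b, 0) = (ωA (D a) b + ssign K i true * ωA a (D b), brA a b, 0))
      ∧ brG (0, 0, 1) (0, 0, 1) = (0, (2 : K) • a₀, 0)
      ∧ (∀ a : A, brG (0, 0, 1) (0, a, 0) = (-(ωA a a₀), D a, 0))
      -- the orthosymplectic form
      ∧ IsBilinMap K (K × A × K) K (dblFormPlus K A ωA)
      ∧ IsSuperSkew K (K × A × K) (dblSub K A subA true true) (dblFormPlus K A ωA)
      ∧ IsClosedForm K (K × A × K) (dblSub K A subA true true) brG (dblFormPlus K A ωA)
      ∧ IsNondegForm K (K × A × K) (dblFormPlus K A ωA)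
      ∧ IsEvenForm K (K × A × K) (dblSub K A subA true true) (dblFormPlus K A ωA) := by
  classical
  obtain ⟨hωb, hskew, hclosed, hnondeg⟩ := hQF
  obtain ⟨hωal, hωsl, hωar, hωsr⟩ := hωb
  obtain ⟨hbal, hbsl, hbar, hbsr⟩ := hLie.bilin
  have hωsl' : ∀ (c : K) (x y : A), ωA (c • x) y = c * ωA x y := fun c x y => by
    rw [hωsl, smul_eq_mul]
  have hωsr' : ∀ (c : K) (x y : A), ωA x (c • y) = c * ωA x y := fun c x y => by
    rw [hωsr, smul_eq_mul]
  have hω0l : ∀ y, ωA 0 y = 0 := fun y => by have := hωsl' 0 0 y; simpa using this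
  have hω0r : ∀ x, ωA x 0 = 0 := fun x => by have := hωsr' 0 x 0; simpa using this
  have hωnl : ∀ x y, ωA (-x) y = -ωA x y := fun x y => by
    have := hωsl' (-1) x y; simpa using this
  have hωnr : ∀ x y, ωA x (-y) = -ωA x y := fun x y => by
    have := hωsr' (-1) x y; simpa using this
  have hωsubl : ∀ x y z, ωA (x - y) z = ωA x z - ωA y z := fun x y z => by
    rw [sub_eq_add_neg, hωal, hωnl, sub_eq_add_neg]
  have hωsubr : ∀ x y z, ωA x (y - z) = ωA x y - ωA x z := fun x y z => by
    rw [sub_eq_add_neg, hωar, hωnr, sub_eq_add_neg]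
  have hb0l : ∀ y, brA 0 y = 0 := fun y => by have := hbsl 0 0 y; simpa using this
  have hb0r : ∀ x, brA x 0 = 0 := fun x => by have := hbsr 0 x 0; simpa using this
  have hbnl : ∀ x y, brA (-x) y = -brA x y := fun x y => by
    have := hbsl (-1) x y; simpa using this
  have hbnr : ∀ x y, brA x (-y) = -brA x y := fun x y => by
    have := hbsr (-1) x y; simpa using this
  have hbsubl : ∀ x y z, brA (x - y) z = brA x z - brA y z := fun x y z => by
    rw [sub_eq_add_neg, hbal, hbnl, sub_eq_add_neg]
  have hbsubr : ∀ x y z, brA x (y - z) = brA x y - brA x z := fun x y z => by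
    rw [sub_eq_add_neg, hbar, hbnr, sub_eq_add_neg]
  have hD0 : D 0 = 0 := by have := hDsmul 0 0; simpa using this
  have hDneg : ∀ x, D (-x) = -D x := fun x => by have := hDsmul (-1) x; simpa using this
  have hDsub : ∀ x y, D (x - y) = D x - D y := fun x y => by
    rw [sub_eq_add_neg, hDadd, hDneg, sub_eq_add_neg]
  have hDs0 : Ds 0 = 0 := by have := hDssmul 0 0; simpa using this
  have h2 : (2:K) ≠ 0 := Ring.two_ne_zero hchar
  have hdec : ∀ y : A, ∃ u ∈ subA false, ∃ v ∈ subA true, y = u + v := by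
    intro y
    have hy : y ∈ subA false ⊔ subA true := by
      rw [hLie.compl.sup_eq_top]; exact Submodule.mem_top
    obtain ⟨u, hu, v, hv, h⟩ := Submodule.mem_sup.1 hy
    exact ⟨u, hu, v, hv, h.symm⟩
  have key1h : ∀ (m : Bool), ∀ y ∈ subA m, ωA a₀ y = -ωA y a₀ := by
    intro m y hy
    have h := hskew m false y hy a₀ ha₀even
    cases m <;> simp [ssign] at h <;> simp [h]
  have key1 : ∀ y : A, ωA a₀ y = -ωA y a₀ := by
    intro y
    obtain ⟨u, hu, v, hv, rfl⟩ := hdec y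
    rw [hωar, hωal, key1h false u hu, key1h true v hv]; ring
  have key1' : ωA a₀ a₀ = 0 := by
    have h := key1 a₀
    have h' : 2 * ωA a₀ a₀ = 0 := by linear_combination h
    exact (mul_eq_zero.1 h').resolve_left h2
  have La₀Ds : ∀ g, ωA a₀ (Ds g) = 0 := by
    intro g
    have h := hDs false a₀ ha₀even g
    rw [hDa₀, hω0l] at h
    simpa [ssign] using h.symm
  have hDsodd : ∀ (m : Bool), ∀ a ∈ subA m, Ds a ∈ subA (!m) := by
    intro m a ha
    have hgDs : ∀ g ∈ subA m, ωA g (Ds a) = 0 := by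
      intro g hg
      have h1 := hDs m g hg a
      have h2 : ωA (D g) a = 0 := by
        apply hEven
        cases m
        · exact Or.inr ⟨hDodd false g hg, ha⟩
        · exact Or.inl ⟨hDodd true g hg, ha⟩
      rw [h2] at h1
      have hsig : ssign K m true ≠ 0 := by cases m <;> norm_num [ssign]
      exact ((mul_eq_zero.1 h1.symm).resolve_left hsig)
    obtain ⟨u, hu, v, hv, huv⟩ := hdec (Ds a)
    cases m with
    | false =>
      have hu0 : u = 0 := by
        apply hnondeg
        intro y
        obtain ⟨p, hp, q, hq, rfl⟩ := hdec y
        have hpu : ωA p u = 0 := by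
          have h1 := hgDs p hp
          rw [huv, hωar] at h1
          have h2 : ωA p v = 0 := hEven p v (Or.inl ⟨hp, hv⟩)
          linear_combination h1 - h2
        have hup : ωA u p = 0 := by
          have h := hskew false false u hu p hp
          simp [ssign] at h
          rw [hpu] at h; simpa using h.symm
        have huq : ωA u q = 0 := hEven u q (Or.inl ⟨hu, hq⟩)
        rw [hωar, hup, huq, add_zero]
      rw [huv, hu0, zero_add]; exact hv
    | true =>
      have hv0 : v = 0 := by
        apply hnondeg
        intro y
        obtain ⟨p, hp, q, hq, rfl⟩ := hdec y
        have hqv : ωA q v = 0 := by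
          have h1 := hgDs q hq
          rw [huv, hωar] at h1
          have h2 : ωA q u = 0 := hEven q u (Or.inr ⟨hq, hu⟩)
          linear_combination h1 - h2
        have hvq : ωA v q = 0 := by
          have h := hskew true true v hv q hq
          simp [ssign] at h
          rw [hqv] at h
          exact h.symm
        have hvp : ωA v p = 0 := hEven v p (Or.inr ⟨hv, hp⟩)
        rw [hωar, hvp, hvq, zero_add]
      rw [huv, hv0, add_zero]; exact hu
  
  have key2 : ∀ (m : Bool), ∀ a ∈ subA m, ∀ b, ωA (Ds a) b = ssign K m true * ωA a (D b) := by
    intro m a ha b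
    have hhom : ∀ (n : Bool), ∀ y ∈ subA n, ωA (Ds a) y = ssign K m true * ωA a (D y) := by
      intro n y hy
      cases m with
      | false =>
        cases n with
        | false =>
          have h1 : ωA (Ds a) y = 0 := hEven _ _ (Or.inr ⟨hDsodd false a ha, hy⟩)
          have h2 : ωA a (D y) = 0 := hEven _ _ (Or.inl ⟨ha, hDodd false y hy⟩)
          rw [h1, h2]; ring
        | true =>
          have h1 := hDs true y hy a
          have h2 := hskew true true (Ds a) (hDsodd false a ha) y hy
          have h3 := hskew false false (D y) (hDodd true y hy) a ha
          simp only [ssign] at h1 h2 h3 ⊢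
          simp at h1 h2 h3 ⊢
          linear_combination h1 - h2 - h3
      | true =>
        cases n with
        | false =>
          have h1 := hDs false y hy a
          have h2 := hskew false false (Ds a) (hDsodd true a ha) y hy
          have h3 := hskew true true (D y) (hDodd false y hy) a ha
          simp only [ssign] at h1 h2 h3 ⊢
          simp at h1 h2 h3 ⊢
          linear_combination h1 + h2 + h3
        | true =>
          have h1 : ωA (Ds a) y = 0 := hEven _ _ (Or.inl ⟨hDsodd true a ha, hy⟩)
          have h2 : ωA a (D y) = 0 := hEven _ _ (Or.inr ⟨ha, hDodd true y hy⟩)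
          rw [h1, h2]; ring
    obtain ⟨u, hu, v, hv, rfl⟩ := hdec b
    rw [hωar, hDadd, hωar, mul_add, hhom false u hu, hhom true v hv]
  have hW : ∀ (m : Bool), ∀ b ∈ subA m, ∀ c,
      ωA a₀ (brA b c) = ωA (brA a₀ b) c + ωA b (brA a₀ c) := by
    intro m b hb c
    have h0 := hΩ b c
    rw [hωsubl, hDD b] at h0
    have h1 := key2 (!m) (Ds b) (hDsodd m b hb) c
    have h2' := key2 m b hb (D c)
    rw [hDD c] at h2'
    cases m with
    | false =>
      simp [ssign] at h1 h2'
      linear_combination - h0 - h1 + h2'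
    | true =>
      simp [ssign] at h1 h2'
      linear_combination - h0 - h1 - h2'
  set Pj := Submodule.linearProjOfIsCompl (subA true) (subA false) hLie.compl.symm with hPj
  set σ : A → A := fun y => y - (2:K) • (Pj y : A) with hσ
  have hσe : ∀ y ∈ subA false, σ y = y := by
    intro y hy
    have h0 : Pj y = 0 := Submodule.linearProjOfIsCompl_apply_right hLie.compl.symm ⟨y, hy⟩
    simp [hσ, h0]
  have hσo : ∀ y ∈ subA true, σ y = -y := by
    intro y hy
    have h0 : Pj y = ⟨y, hy⟩ := Submodule.linearProjOfIsCompl_apply_left hLie.compl.symm ⟨y, hy⟩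
    simp only [hσ, h0]
    rw [two_smul]; abel
  have hσadd : ∀ x y, σ (x + y) = σ x + σ y := by
    intro x y
    simp only [hσ, map_add, Submodule.coe_add]
    rw [smul_add]; abel
  have hσsmul : ∀ (c : K) (x : A), σ (c • x) = c • σ x := by
    intro c x
    simp only [hσ, map_smul, Submodule.coe_smul]
    rw [smul_comm, smul_sub]
  have hσ0 : σ 0 = 0 := by simp [hσ]
  
  have hmem : ∀ (m : Bool) (W : K × A × K), W ∈ dblSub K A subA true true m ↔
      (W.2.1 ∈ subA m ∧ (m = false → W.1 = 0 ∧ W.2.2 = 0)) := by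
    intro m W
    cases m <;> simp only [dblSub, Submodule.mem_prod, Bool.false_eq_true, if_false, if_true,
      Submodule.mem_bot, Submodule.mem_top, true_and, and_true, forall_const, imp_self,
      Bool.true_eq_false, false_implies] <;> tauto
  have sFF : ssign K false false = 1 := rfl
  have sFT : ssign K false true = 1 := rfl
  have sTF : ssign K true false = 1 := rfl
  have sTT : ssign K true true = -1 := rfl
  refine ⟨fun p q =>
    (ωA (D p.2.1 + Ds p.2.1) q.2.1 + p.2.2 * ωA a₀ q.2.1 - q.2.2 * ωA a₀ (σ p.2.1),
     brA p.2.1 q.2.1 + p.2.2 • D q.2.1 - q.2.2 • D (σ p.2.1) + (2 * p.2.2 * q.2.2) • a₀,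
     0), ⟨?_, ?_, ?_, ?_, ?_, ?_⟩, ?_, ?_, ?_, ?_, ?_, ?_, ?_, ?_, ?_⟩
  · -- compl
    constructor
    · rw [disjoint_iff]
      ext W
      simp only [Submodule.mem_inf, hmem, Submodule.mem_bot]
      constructor
      · rintro ⟨⟨h1, h2⟩, ⟨h3, -⟩⟩
        obtain ⟨hs, ht⟩ := h2 trivial
        have : W.2.1 = 0 := by
          have := hLie.compl.disjoint
          rw [disjoint_iff] at this
          have hm : W.2.1 ∈ subA false ⊓ subA true := ⟨h1, h3⟩
          rw [this] at hm
          simpa using hm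
        exact Prod.ext hs (Prod.ext this ht)
      · rintro rfl
        simp
    · rw [codisjoint_iff, eq_top_iff]
      intro W _
      obtain ⟨u, hu, v, hv, huv⟩ := hdec W.2.1
      rw [Submodule.mem_sup]
      refine ⟨(0, u, 0), ?_, (W.1, v, W.2.2), ?_, ?_⟩
      · rw [hmem]; exact ⟨hu, fun _ => ⟨rfl, rfl⟩⟩
      · rw [hmem]; exact ⟨hv, fun h => by simp at h⟩
      · ext <;> simp [huv.symm]
  · -- bilin
    refine ⟨?_, ?_, ?_, ?_⟩
    · intro x y z
      refine Prod.ext ?_ (Prod.ext ?_ ?_) <;>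
        simp only [Prod.fst_add, Prod.snd_add, hσadd, hDadd, hDsadd, hbal, hωal, hωar,
          hωsl', hωsr', Prod.mk_add_mk]
      · ring
      · module
      · simp
    · intro c x y
      refine Prod.ext ?_ (Prod.ext ?_ ?_) <;>
        simp only [Prod.smul_fst, Prod.smul_snd, hσsmul, hDsmul, hDssmul, hbsl, hωsl',
          hωsr', smul_eq_mul, Prod.smul_mk]
      · simp only [hωal, hωsl']
        ring
      · module
      · simp
    · intro x y z
      refine Prod.ext ?_ (Prod.ext ?_ ?_) <;>
        simp only [Prod.fst_add, Prod.snd_add, hσadd, hbar, hωal, hωar, hωsl', hωsr',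
          Prod.mk_add_mk]
      · ring
      · rw [hDadd]
        module
      · simp
    · intro c x y
      refine Prod.ext ?_ (Prod.ext ?_ ?_) <;>
        simp only [Prod.smul_fst, Prod.smul_snd, hσsmul, hDsmul, hbsr, hωsl', hωsr',
          smul_eq_mul, Prod.smul_mk]
      · ring
      · module
      · simp
  · -- graded
    intro i j X hX Y hY
    rw [hmem] at hX hY
    obtain ⟨hXa, hX0⟩ := hX
    obtain ⟨hYa, hY0⟩ := hY
    rw [hmem]
    dsimp only
    cases i with
    | false =>
      obtain ⟨hs, ht⟩ := hX0 rfl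
      rw [ht, hσe X.2.1 hXa]
      cases j with
      | false =>
        obtain ⟨hs', ht'⟩ := hY0 rfl
        rw [ht']
        constructor
        · simpa using hLie.graded false false X.2.1 hXa Y.2.1 hYa
        · intro _
          constructor
          · have e1 : ωA (D X.2.1) Y.2.1 = 0 := hEven _ _ (Or.inr ⟨hDodd false X.2.1 hXa, hYa⟩)
            have e2 : ωA (Ds X.2.1) Y.2.1 = 0 :=
              hEven _ _ (Or.inr ⟨hDsodd false X.2.1 hXa, hYa⟩)
            rw [hωal, e1, e2]; ring
          · rfl
      | true =>
        constructor
        · refine add_mem (sub_mem (add_mem ?_ ?_) ?_) ?_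
          · simpa using hLie.graded false true X.2.1 hXa Y.2.1 hYa
          · rw [zero_smul]; exact zero_mem _
          · exact Submodule.smul_mem _ _ (by simpa using hDodd false X.2.1 hXa)
          · simp
        · intro h; simp at h
    | true =>
      rw [hσo X.2.1 hXa, hDneg]
      cases j with
      | false =>
        obtain ⟨hs', ht'⟩ := hY0 rfl
        rw [ht']
        constructor
        · refine add_mem (sub_mem (add_mem ?_ ?_) ?_) ?_
          · simpa using hLie.graded true false X.2.1 hXa Y.2.1 hYa
          · exact Submodule.smul_mem _ _ (by simpa using hDodd false Y.2.1 hYa)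
          · rw [zero_smul]; exact zero_mem _
          · simp
        · intro h; simp at h
      | true =>
        constructor
        · refine add_mem (sub_mem (add_mem ?_ ?_) ?_) ?_
          · simpa using hLie.graded true true X.2.1 hXa Y.2.1 hYa
          · exact Submodule.smul_mem _ _ (by simpa using hDodd true Y.2.1 hYa)
          · exact Submodule.smul_mem _ _ (neg_mem (by simpa using hDodd true X.2.1 hXa))
          · exact Submodule.smul_mem _ _ ha₀even
        · intro _
          constructor
          · have e1 : ωA (D X.2.1) Y.2.1 = 0 := hEven _ _ (Or.inl ⟨hDodd true X.2.1 hXa, hYa⟩)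
            have e2 : ωA (Ds X.2.1) Y.2.1 = 0 :=
              hEven _ _ (Or.inl ⟨hDsodd true X.2.1 hXa, hYa⟩)
            have e3 : ωA a₀ Y.2.1 = 0 := hEven _ _ (Or.inl ⟨ha₀even, hYa⟩)
            have e4 : ωA a₀ X.2.1 = 0 := hEven _ _ (Or.inl ⟨ha₀even, hXa⟩)
            rw [hωal, e1, e2, e3, hωnr, e4]; ring
          · rfl
  · -- antisymm
    intro i j X hX Y hY
    rw [hmem] at hX hY
    obtain ⟨hXa, hX0⟩ := hX
    obtain ⟨hYa, hY0⟩ := hY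
    have hsk := hLie.antisymm i j X.2.1 hXa Y.2.1 hYa
    have k2X := key2 i X.2.1 hXa
    have k2Y := key2 j Y.2.1 hYa
    simp only [Prod.smul_mk, Prod.neg_mk, Prod.mk.injEq, smul_eq_mul]
    cases i with
    | false =>
      obtain ⟨hs, ht⟩ := hX0 rfl
      cases j with
      | false =>
        obtain ⟨hs', ht'⟩ := hY0 rfl
        have T1 := hskew true false (D X.2.1) (hDodd false X.2.1 hXa) Y.2.1 hYa
        have T2 := hskew true false (D Y.2.1) (hDodd false Y.2.1 hYa) X.2.1 hXa
        simp only [sFF, sFT, sTF, sTT] at hsk T1 T2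
        refine ⟨?_, ?_, ?_⟩
        · rw [hσe X.2.1 hXa, hσe Y.2.1 hYa, ht, ht', hωal, hωal, k2X Y.2.1, k2Y X.2.1, sFT]
          try simp only [sFF, sFT, sTF, sTT]
          linear_combination T1 + T2
        · rw [hσe X.2.1 hXa, hσe Y.2.1 hYa, ht, ht']
          try simp only [sFF, sFT, sTF, sTT]
          linear_combination (norm := module) hsk
        · simp
      | true =>
        have T1 := hskew true true (D X.2.1) (hDodd false X.2.1 hXa) Y.2.1 hYa
        have T2 := hskew false false (D Y.2.1) (hDodd true Y.2.1 hYa) X.2.1 hXa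
        simp only [sFF, sFT, sTF, sTT] at hsk T1 T2
        refine ⟨?_, ?_, ?_⟩
        · rw [hσe X.2.1 hXa, hσo Y.2.1 hYa, ht, hωal, hωal, k2X Y.2.1, k2Y X.2.1, sFT, sTT,
            hωnr]
          try simp only [sFF, sFT, sTF, sTT]
          linear_combination - T1 + T2
        · rw [hσe X.2.1 hXa, hσo Y.2.1 hYa, ht, hDneg]
          try simp only [sFF, sFT, sTF, sTT]
          linear_combination (norm := module) hsk
        · simp
    | true =>
      cases j with
      | false =>
        obtain ⟨hs', ht'⟩ := hY0 rfl
        have T1 := hskew false false (D X.2.1) (hDodd true X.2.1 hXa) Y.2.1 hYa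
        have T2 := hskew true true (D Y.2.1) (hDodd false Y.2.1 hYa) X.2.1 hXa
        simp only [sFF, sFT, sTF, sTT] at hsk T1 T2
        refine ⟨?_, ?_, ?_⟩
        · rw [hσo X.2.1 hXa, hσe Y.2.1 hYa, ht', hωal, hωal, k2X Y.2.1, k2Y X.2.1, sFT, sTT,
            hωnr]
          try simp only [sFF, sFT, sTF, sTT]
          linear_combination T1 - T2
        · rw [hσo X.2.1 hXa, hσe Y.2.1 hYa, ht', hDneg]
          try simp only [sFF, sFT, sTF, sTT]
          linear_combination (norm := module) hsk
        · simp
      | true =>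
        have T1 := hskew false true (D X.2.1) (hDodd true X.2.1 hXa) Y.2.1 hYa
        have T2 := hskew false true (D Y.2.1) (hDodd true Y.2.1 hYa) X.2.1 hXa
        simp only [sFF, sFT, sTF, sTT] at hsk T1 T2
        refine ⟨?_, ?_, ?_⟩
        · rw [hσo X.2.1 hXa, hσo Y.2.1 hYa, hωal, hωal, k2X Y.2.1, k2Y X.2.1, sTT, hωnr, hωnr]
          try simp only [sFF, sFT, sTF, sTT]
          linear_combination T2 - T1
        · rw [hσo X.2.1 hXa, hσo Y.2.1 hYa, hDneg, hDneg]
          try simp only [sFF, sFT, sTF, sTT]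
          linear_combination (norm := module) hsk
        · simp
  · -- jacobi
    intro i j k X hX Y hY Z hZ
    rw [hmem] at hX hY hZ
    obtain ⟨hXa, hX0⟩ := hX
    obtain ⟨hYa, hY0⟩ := hY
    obtain ⟨hZa, hZ0⟩ := hZ
    have k2X := key2 i X.2.1 hXa
    have k2Y := key2 j Y.2.1 hYa
    have k2Z := key2 k Z.2.1 hZa
    cases i with
    | false =>
      cases j with
      | false =>
        cases k with
        | false =>
          obtain ⟨hsX, htX⟩ := hX0 rfl
          obtain ⟨hsY, htY⟩ := hY0 rfl
          obtain ⟨hsZ, htZ⟩ := hZ0 rfl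
          have C1 := hclosed true false false (D X.2.1) (hDodd false X.2.1 hXa) Y.2.1 hYa Z.2.1 hZa
          have C2 := hclosed false true false X.2.1 hXa (D Y.2.1) (hDodd false Y.2.1 hYa) Z.2.1 hZa
          have C3 := hclosed false false true X.2.1 hXa Y.2.1 hYa (D Z.2.1) (hDodd false Z.2.1 hZa)
          have J := hLie.jacobi false false false X.2.1 hXa Y.2.1 hYa Z.2.1 hZa
          simp only [sFF, sFT, sTF, sTT, one_smul, neg_smul, neg_neg] at C1 C2 C3 J
          try dsimp only
          simp only [Prod.smul_mk, Prod.mk_add_mk, Prod.mk_eq_zero, smul_eq_mul]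
          refine ⟨?_, ?_, ?_⟩
          · simp only [hσe X.2.1 hXa, hσe Y.2.1 hYa, hσe Z.2.1 hZa, hDneg, hωnr, htX, htY, htZ]
            simp only [hωar, hωsubr, hωal, hωsl', hωsr', hωnr, hω0r, k2X, k2Y, k2Z, hDD,
              hDder false Y.2.1 hYa, hDder false Z.2.1 hZa, hDder false X.2.1 hXa, hDa₀,
              hW false Y.2.1 hYa, hW false Z.2.1 hZa, hW false X.2.1 hXa,
              sFF, sFT, sTF, sTT]
            linear_combination (1 : K) * C1 + (1 : K) * C2 + (1 : K) * C3
          · simp only [hσe X.2.1 hXa, hσe Y.2.1 hYa, hσe Z.2.1 hZa, hDneg, hbnr, htX, htY, htZ]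
            simp only [hbar, hbsubr, hbsr, hbnr, hb0r, hDadd, hDsub, hDsmul, hDneg, hD0, hDa₀,
              smul_zero, sFF, sFT, sTF, sTT]
            linear_combination (norm := module) J
          · simp
        | true =>
          obtain ⟨hsX, htX⟩ := hX0 rfl
          obtain ⟨hsY, htY⟩ := hY0 rfl
          have C1 := hclosed true false true (D X.2.1) (hDodd false X.2.1 hXa) Y.2.1 hYa Z.2.1 hZa
          have C2 := hclosed false true true X.2.1 hXa (D Y.2.1) (hDodd false Y.2.1 hYa) Z.2.1 hZa
          have C3 := hclosed false false false X.2.1 hXa Y.2.1 hYa (D Z.2.1) (hDodd true Z.2.1 hZa)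
          have J := hLie.jacobi false false true X.2.1 hXa Y.2.1 hYa Z.2.1 hZa
          have GX : brA a₀ X.2.1 ∈ subA false := by simpa using hLie.graded false false a₀ ha₀even X.2.1 hXa
          have S5 := hskew false false (brA a₀ X.2.1) GX Y.2.1 hYa
          have S6 := hskew true true (D X.2.1) (hDodd false X.2.1 hXa) (D Y.2.1) (hDodd false Y.2.1 hYa)
          have D3 := hDder false X.2.1 hXa Y.2.1
          have A3 := hLie.antisymm true false (D X.2.1) (hDodd false X.2.1 hXa) Y.2.1 hYa
          simp only [sFF, sFT, sTF, sTT, one_smul, neg_smul, neg_neg] at C1 C2 C3 J S5 S6 D3 A3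
          try dsimp only
          simp only [Prod.smul_mk, Prod.mk_add_mk, Prod.mk_eq_zero, smul_eq_mul]
          refine ⟨?_, ?_, ?_⟩
          · simp only [hσe X.2.1 hXa, hσe Y.2.1 hYa, hσo Z.2.1 hZa, hDneg, hωnr, htX, htY]
            simp only [hωar, hωsubr, hωal, hωsl', hωsr', hωnr, hω0r, k2X, k2Y, k2Z, hDD,
              hDder false Y.2.1 hYa, hDder true Z.2.1 hZa, hDder false X.2.1 hXa, hDa₀,
              hW false Y.2.1 hYa, hW true Z.2.1 hZa, hW false X.2.1 hXa,
              sFF, sFT, sTF, sTT]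
            linear_combination (-1 : K) * C1 + (1 : K) * C2 + (1 : K) * C3 + (1 : K) * Z.2.2 * S5 + (1 : K) * Z.2.2 * S6
          · simp only [hσe X.2.1 hXa, hσe Y.2.1 hYa, hσo Z.2.1 hZa, hDneg, hbnr, htX, htY]
            simp only [hbar, hbsubr, hbsr, hbnr, hb0r, hDadd, hDsub, hDsmul, hDneg, hD0, hDa₀,
              smul_zero, sFF, sFT, sTF, sTT]
            linear_combination (norm := module) J + ((1 : K) * Z.2.2) • D3 + ((1 : K) * Z.2.2) • A3
          · simp
      | true =>
        cases k with
        | false =>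
          obtain ⟨hsX, htX⟩ := hX0 rfl
          obtain ⟨hsZ, htZ⟩ := hZ0 rfl
          have C1 := hclosed true true false (D X.2.1) (hDodd false X.2.1 hXa) Y.2.1 hYa Z.2.1 hZa
          have C2 := hclosed false false false X.2.1 hXa (D Y.2.1) (hDodd true Y.2.1 hYa) Z.2.1 hZa
          have C3 := hclosed false true true X.2.1 hXa Y.2.1 hYa (D Z.2.1) (hDodd false Z.2.1 hZa)
          have J := hLie.jacobi false true false X.2.1 hXa Y.2.1 hYa Z.2.1 hZa
          have GZ : brA a₀ Z.2.1 ∈ subA false := by simpa using hLie.graded false false a₀ ha₀even Z.2.1 hZa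
          have S3 := hskew false false (brA a₀ Z.2.1) GZ X.2.1 hXa
          have S4 := hskew true true (D Z.2.1) (hDodd false Z.2.1 hZa) (D X.2.1) (hDodd false X.2.1 hXa)
          have D2 := hDder false Z.2.1 hZa X.2.1
          have A2 := hLie.antisymm true false (D Z.2.1) (hDodd false Z.2.1 hZa) X.2.1 hXa
          simp only [sFF, sFT, sTF, sTT, one_smul, neg_smul, neg_neg] at C1 C2 C3 J S3 S4 D2 A2
          try dsimp only
          simp only [Prod.smul_mk, Prod.mk_add_mk, Prod.mk_eq_zero, smul_eq_mul]
          refine ⟨?_, ?_, ?_⟩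
          · simp only [hσe X.2.1 hXa, hσo Y.2.1 hYa, hσe Z.2.1 hZa, hDneg, hωnr, htX, htZ]
            simp only [hωar, hωsubr, hωal, hωsl', hωsr', hωnr, hω0r, k2X, k2Y, k2Z, hDD,
              hDder true Y.2.1 hYa, hDder false Z.2.1 hZa, hDder false X.2.1 hXa, hDa₀,
              hW true Y.2.1 hYa, hW false Z.2.1 hZa, hW false X.2.1 hXa,
              sFF, sFT, sTF, sTT]
            linear_combination (1 : K) * C1 + (1 : K) * C2 + (-1 : K) * C3 + (1 : K) * Y.2.2 * S3 + (1 : K) * Y.2.2 * S4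
          · simp only [hσe X.2.1 hXa, hσo Y.2.1 hYa, hσe Z.2.1 hZa, hDneg, hbnr, htX, htZ]
            simp only [hbar, hbsubr, hbsr, hbnr, hb0r, hDadd, hDsub, hDsmul, hDneg, hD0, hDa₀,
              smul_zero, sFF, sFT, sTF, sTT]
            linear_combination (norm := module) J + ((1 : K) * Y.2.2) • D2 + ((1 : K) * Y.2.2) • A2
          · simp
        | true =>
          obtain ⟨hsX, htX⟩ := hX0 rfl
          have C1 := hclosed true true true (D X.2.1) (hDodd false X.2.1 hXa) Y.2.1 hYa Z.2.1 hZa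
          have C2 := hclosed false false true X.2.1 hXa (D Y.2.1) (hDodd true Y.2.1 hYa) Z.2.1 hZa
          have C3 := hclosed false true false X.2.1 hXa Y.2.1 hYa (D Z.2.1) (hDodd true Z.2.1 hZa)
          have J := hLie.jacobi false true true X.2.1 hXa Y.2.1 hYa Z.2.1 hZa
          have GZ : brA a₀ Z.2.1 ∈ subA true := by simpa using hLie.graded false true a₀ ha₀even Z.2.1 hZa
          have S3 := hskew true false (brA a₀ Z.2.1) GZ X.2.1 hXa
          have S4 := hskew false true (D Z.2.1) (hDodd true Z.2.1 hZa) (D X.2.1) (hDodd false X.2.1 hXa)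
          have D2 := hDder true Z.2.1 hZa X.2.1
          have A2 := hLie.antisymm false false (D Z.2.1) (hDodd true Z.2.1 hZa) X.2.1 hXa
          have GX : brA a₀ X.2.1 ∈ subA false := by simpa using hLie.graded false false a₀ ha₀even X.2.1 hXa
          have S5 := hskew false true (brA a₀ X.2.1) GX Y.2.1 hYa
          have S6 := hskew true false (D X.2.1) (hDodd false X.2.1 hXa) (D Y.2.1) (hDodd true Y.2.1 hYa)
          have D3 := hDder false X.2.1 hXa Y.2.1
          have A3 := hLie.antisymm true true (D X.2.1) (hDodd false X.2.1 hXa) Y.2.1 hYa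
          have AAX := hLie.antisymm false false a₀ ha₀even X.2.1 hXa
          simp only [sFF, sFT, sTF, sTT, one_smul, neg_smul, neg_neg] at C1 C2 C3 J S3 S4 D2 A2 S5 S6 D3 A3 AAX
          try dsimp only
          simp only [Prod.smul_mk, Prod.mk_add_mk, Prod.mk_eq_zero, smul_eq_mul]
          refine ⟨?_, ?_, ?_⟩
          · simp only [hσe X.2.1 hXa, hσo Y.2.1 hYa, hσo Z.2.1 hZa, hDneg, hωnr, htX]
            simp only [hωar, hωsubr, hωal, hωsl', hωsr', hωnr, hω0r, k2X, k2Y, k2Z, hDD,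
              hDder true Y.2.1 hYa, hDder true Z.2.1 hZa, hDder false X.2.1 hXa, hDa₀,
              hW true Y.2.1 hYa, hW true Z.2.1 hZa, hW false X.2.1 hXa,
              sFF, sFT, sTF, sTT]
            linear_combination (-1 : K) * C1 + (1 : K) * C2 + (-1 : K) * C3 + (1 : K) * Y.2.2 * S3 + (1 : K) * Y.2.2 * S4 + (-1 : K) * Z.2.2 * S5 + (1 : K) * Z.2.2 * S6 + (2 : K) * Y.2.2 * Z.2.2 * key1 (D X.2.1)
          · simp only [hσe X.2.1 hXa, hσo Y.2.1 hYa, hσo Z.2.1 hZa, hDneg, hbnr, htX]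
            simp only [hbar, hbsubr, hbsr, hbnr, hb0r, hDadd, hDsub, hDsmul, hDneg, hD0, hDa₀,
              smul_zero, sFF, sFT, sTF, sTT]
            linear_combination (norm := module) J + ((1 : K) * Y.2.2) • D2 + ((1 : K) * Y.2.2) • A2 + ((-1 : K) * Z.2.2) • D3 + ((1 : K) * Z.2.2) • A3 + ((2 : K) * Y.2.2 * Z.2.2) • hDD X.2.1 + ((2 : K) * Y.2.2 * Z.2.2) • AAX
          · simp
    | true =>
      cases j with
      | false =>
        cases k with
        | false =>
          obtain ⟨hsY, htY⟩ := hY0 rfl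
          obtain ⟨hsZ, htZ⟩ := hZ0 rfl
          have C1 := hclosed false false false (D X.2.1) (hDodd true X.2.1 hXa) Y.2.1 hYa Z.2.1 hZa
          have C2 := hclosed true true false X.2.1 hXa (D Y.2.1) (hDodd false Y.2.1 hYa) Z.2.1 hZa
          have C3 := hclosed true false true X.2.1 hXa Y.2.1 hYa (D Z.2.1) (hDodd false Z.2.1 hZa)
          have J := hLie.jacobi true false false X.2.1 hXa Y.2.1 hYa Z.2.1 hZa
          have GY : brA a₀ Y.2.1 ∈ subA false := by simpa using hLie.graded false false a₀ ha₀even Y.2.1 hYa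
          have S1 := hskew false false (brA a₀ Y.2.1) GY Z.2.1 hZa
          have S2 := hskew true true (D Y.2.1) (hDodd false Y.2.1 hYa) (D Z.2.1) (hDodd false Z.2.1 hZa)
          have D1 := hDder false Y.2.1 hYa Z.2.1
          have A1 := hLie.antisymm true false (D Y.2.1) (hDodd false Y.2.1 hYa) Z.2.1 hZa
          simp only [sFF, sFT, sTF, sTT, one_smul, neg_smul, neg_neg] at C1 C2 C3 J S1 S2 D1 A1
          try dsimp only
          simp only [Prod.smul_mk, Prod.mk_add_mk, Prod.mk_eq_zero, smul_eq_mul]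
          refine ⟨?_, ?_, ?_⟩
          · simp only [hσo X.2.1 hXa, hσe Y.2.1 hYa, hσe Z.2.1 hZa, hDneg, hωnr, htY, htZ]
            simp only [hωar, hωsubr, hωal, hωsl', hωsr', hωnr, hω0r, k2X, k2Y, k2Z, hDD,
              hDder false Y.2.1 hYa, hDder false Z.2.1 hZa, hDder true X.2.1 hXa, hDa₀,
              hW false Y.2.1 hYa, hW false Z.2.1 hZa, hW true X.2.1 hXa,
              sFF, sFT, sTF, sTT]
            linear_combination (1 : K) * C1 + (-1 : K) * C2 + (1 : K) * C3 + (1 : K) * X.2.2 * S1 + (1 : K) * X.2.2 * S2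
          · simp only [hσo X.2.1 hXa, hσe Y.2.1 hYa, hσe Z.2.1 hZa, hDneg, hbnr, htY, htZ]
            simp only [hbar, hbsubr, hbsr, hbnr, hb0r, hDadd, hDsub, hDsmul, hDneg, hD0, hDa₀,
              smul_zero, sFF, sFT, sTF, sTT]
            linear_combination (norm := module) J + ((1 : K) * X.2.2) • D1 + ((1 : K) * X.2.2) • A1
          · simp
        | true =>
          obtain ⟨hsY, htY⟩ := hY0 rfl
          have C1 := hclosed false false true (D X.2.1) (hDodd true X.2.1 hXa) Y.2.1 hYa Z.2.1 hZa
          have C2 := hclosed true true true X.2.1 hXa (D Y.2.1) (hDodd false Y.2.1 hYa) Z.2.1 hZa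
          have C3 := hclosed true false false X.2.1 hXa Y.2.1 hYa (D Z.2.1) (hDodd true Z.2.1 hZa)
          have J := hLie.jacobi true false true X.2.1 hXa Y.2.1 hYa Z.2.1 hZa
          have GY : brA a₀ Y.2.1 ∈ subA false := by simpa using hLie.graded false false a₀ ha₀even Y.2.1 hYa
          have S1 := hskew false true (brA a₀ Y.2.1) GY Z.2.1 hZa
          have S2 := hskew true false (D Y.2.1) (hDodd false Y.2.1 hYa) (D Z.2.1) (hDodd true Z.2.1 hZa)
          have D1 := hDder false Y.2.1 hYa Z.2.1
          have A1 := hLie.antisymm true true (D Y.2.1) (hDodd false Y.2.1 hYa) Z.2.1 hZa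
          have GX : brA a₀ X.2.1 ∈ subA true := by simpa using hLie.graded false true a₀ ha₀even X.2.1 hXa
          have S5 := hskew true false (brA a₀ X.2.1) GX Y.2.1 hYa
          have S6 := hskew false true (D X.2.1) (hDodd true X.2.1 hXa) (D Y.2.1) (hDodd false Y.2.1 hYa)
          have D3 := hDder true X.2.1 hXa Y.2.1
          have A3 := hLie.antisymm false false (D X.2.1) (hDodd true X.2.1 hXa) Y.2.1 hYa
          have AAY := hLie.antisymm false false a₀ ha₀even Y.2.1 hYa
          simp only [sFF, sFT, sTF, sTT, one_smul, neg_smul, neg_neg] at C1 C2 C3 J S1 S2 D1 A1 S5 S6 D3 A3 AAY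
          try dsimp only
          simp only [Prod.smul_mk, Prod.mk_add_mk, Prod.mk_eq_zero, smul_eq_mul]
          refine ⟨?_, ?_, ?_⟩
          · simp only [hσo X.2.1 hXa, hσe Y.2.1 hYa, hσo Z.2.1 hZa, hDneg, hωnr, htY]
            simp only [hωar, hωsubr, hωal, hωsl', hωsr', hωnr, hω0r, k2X, k2Y, k2Z, hDD,
              hDder false Y.2.1 hYa, hDder true Z.2.1 hZa, hDder true X.2.1 hXa, hDa₀,
              hW false Y.2.1 hYa, hW true Z.2.1 hZa, hW true X.2.1 hXa,
              sFF, sFT, sTF, sTT]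
            linear_combination (-1 : K) * C1 + (-1 : K) * C2 + (1 : K) * C3 + (-1 : K) * X.2.2 * S1 + (1 : K) * X.2.2 * S2 + (1 : K) * Z.2.2 * S5 + (1 : K) * Z.2.2 * S6 + (2 : K) * Z.2.2 * X.2.2 * key1 (D Y.2.1)
          · simp only [hσo X.2.1 hXa, hσe Y.2.1 hYa, hσo Z.2.1 hZa, hDneg, hbnr, htY]
            simp only [hbar, hbsubr, hbsr, hbnr, hb0r, hDadd, hDsub, hDsmul, hDneg, hD0, hDa₀,
              smul_zero, sFF, sFT, sTF, sTT]
            linear_combination (norm := module) J + ((-1 : K) * X.2.2) • D1 + ((1 : K) * X.2.2) • A1 + ((1 : K) * Z.2.2) • D3 + ((1 : K) * Z.2.2) • A3 + ((2 : K) * Z.2.2 * X.2.2) • hDD Y.2.1 + ((2 : K) * Z.2.2 * X.2.2) • AAY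
          · simp
      | true =>
        cases k with
        | false =>
          obtain ⟨hsZ, htZ⟩ := hZ0 rfl
          have C1 := hclosed false true false (D X.2.1) (hDodd true X.2.1 hXa) Y.2.1 hYa Z.2.1 hZa
          have C2 := hclosed true false false X.2.1 hXa (D Y.2.1) (hDodd true Y.2.1 hYa) Z.2.1 hZa
          have C3 := hclosed true true true X.2.1 hXa Y.2.1 hYa (D Z.2.1) (hDodd false Z.2.1 hZa)
          have J := hLie.jacobi true true false X.2.1 hXa Y.2.1 hYa Z.2.1 hZa
          have GY : brA a₀ Y.2.1 ∈ subA true := by simpa using hLie.graded false true a₀ ha₀even Y.2.1 hYa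
          have S1 := hskew true false (brA a₀ Y.2.1) GY Z.2.1 hZa
          have S2 := hskew false true (D Y.2.1) (hDodd true Y.2.1 hYa) (D Z.2.1) (hDodd false Z.2.1 hZa)
          have D1 := hDder true Y.2.1 hYa Z.2.1
          have A1 := hLie.antisymm false false (D Y.2.1) (hDodd true Y.2.1 hYa) Z.2.1 hZa
          have GZ : brA a₀ Z.2.1 ∈ subA false := by simpa using hLie.graded false false a₀ ha₀even Z.2.1 hZa
          have S3 := hskew false true (brA a₀ Z.2.1) GZ X.2.1 hXa
          have S4 := hskew true false (D Z.2.1) (hDodd false Z.2.1 hZa) (D X.2.1) (hDodd true X.2.1 hXa)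
          have D2 := hDder false Z.2.1 hZa X.2.1
          have A2 := hLie.antisymm true true (D Z.2.1) (hDodd false Z.2.1 hZa) X.2.1 hXa
          have AAZ := hLie.antisymm false false a₀ ha₀even Z.2.1 hZa
          simp only [sFF, sFT, sTF, sTT, one_smul, neg_smul, neg_neg] at C1 C2 C3 J S1 S2 D1 A1 S3 S4 D2 A2 AAZ
          try dsimp only
          simp only [Prod.smul_mk, Prod.mk_add_mk, Prod.mk_eq_zero, smul_eq_mul]
          refine ⟨?_, ?_, ?_⟩
          · simp only [hσo X.2.1 hXa, hσo Y.2.1 hYa, hσe Z.2.1 hZa, hDneg, hωnr, htZ]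
            simp only [hωar, hωsubr, hωal, hωsl', hωsr', hωnr, hω0r, k2X, k2Y, k2Z, hDD,
              hDder true Y.2.1 hYa, hDder false Z.2.1 hZa, hDder true X.2.1 hXa, hDa₀,
              hW true Y.2.1 hYa, hW false Z.2.1 hZa, hW true X.2.1 hXa,
              sFF, sFT, sTF, sTT]
            linear_combination (1 : K) * C1 + (-1 : K) * C2 + (-1 : K) * C3 + (1 : K) * X.2.2 * S1 + (1 : K) * X.2.2 * S2 + (-1 : K) * Y.2.2 * S3 + (1 : K) * Y.2.2 * S4 + (2 : K) * X.2.2 * Y.2.2 * key1 (D Z.2.1)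
          · simp only [hσo X.2.1 hXa, hσo Y.2.1 hYa, hσe Z.2.1 hZa, hDneg, hbnr, htZ]
            simp only [hbar, hbsubr, hbsr, hbnr, hb0r, hDadd, hDsub, hDsmul, hDneg, hD0, hDa₀,
              smul_zero, sFF, sFT, sTF, sTT]
            linear_combination (norm := module) J + ((1 : K) * X.2.2) • D1 + ((1 : K) * X.2.2) • A1 + ((-1 : K) * Y.2.2) • D2 + ((1 : K) * Y.2.2) • A2 + ((2 : K) * X.2.2 * Y.2.2) • hDD Z.2.1 + ((2 : K) * X.2.2 * Y.2.2) • AAZ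
          · simp
        | true =>
          have C1 := hclosed false true true (D X.2.1) (hDodd true X.2.1 hXa) Y.2.1 hYa Z.2.1 hZa
          have C2 := hclosed true false true X.2.1 hXa (D Y.2.1) (hDodd true Y.2.1 hYa) Z.2.1 hZa
          have C3 := hclosed true true false X.2.1 hXa Y.2.1 hYa (D Z.2.1) (hDodd true Z.2.1 hZa)
          have J := hLie.jacobi true true true X.2.1 hXa Y.2.1 hYa Z.2.1 hZa
          have GY : brA a₀ Y.2.1 ∈ subA true := by simpa using hLie.graded false true a₀ ha₀even Y.2.1 hYa
          have S1 := hskew true true (brA a₀ Y.2.1) GY Z.2.1 hZa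
          have S2 := hskew false false (D Y.2.1) (hDodd true Y.2.1 hYa) (D Z.2.1) (hDodd true Z.2.1 hZa)
          have D1 := hDder true Y.2.1 hYa Z.2.1
          have A1 := hLie.antisymm false true (D Y.2.1) (hDodd true Y.2.1 hYa) Z.2.1 hZa
          have GZ : brA a₀ Z.2.1 ∈ subA true := by simpa using hLie.graded false true a₀ ha₀even Z.2.1 hZa
          have S3 := hskew true true (brA a₀ Z.2.1) GZ X.2.1 hXa
          have S4 := hskew false false (D Z.2.1) (hDodd true Z.2.1 hZa) (D X.2.1) (hDodd true X.2.1 hXa)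
          have D2 := hDder true Z.2.1 hZa X.2.1
          have A2 := hLie.antisymm false true (D Z.2.1) (hDodd true Z.2.1 hZa) X.2.1 hXa
          have GX : brA a₀ X.2.1 ∈ subA true := by simpa using hLie.graded false true a₀ ha₀even X.2.1 hXa
          have S5 := hskew true true (brA a₀ X.2.1) GX Y.2.1 hYa
          have S6 := hskew false false (D X.2.1) (hDodd true X.2.1 hXa) (D Y.2.1) (hDodd true Y.2.1 hYa)
          have D3 := hDder true X.2.1 hXa Y.2.1
          have A3 := hLie.antisymm false true (D X.2.1) (hDodd true X.2.1 hXa) Y.2.1 hYa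
          have AAZ := hLie.antisymm false true a₀ ha₀even Z.2.1 hZa
          have AAX := hLie.antisymm false true a₀ ha₀even X.2.1 hXa
          have AAY := hLie.antisymm false true a₀ ha₀even Y.2.1 hYa
          simp only [sFF, sFT, sTF, sTT, one_smul, neg_smul, neg_neg] at C1 C2 C3 J S1 S2 D1 A1 S3 S4 D2 A2 S5 S6 D3 A3 AAZ AAX AAY
          try dsimp only
          simp only [Prod.smul_mk, Prod.mk_add_mk, Prod.mk_eq_zero, smul_eq_mul]
          refine ⟨?_, ?_, ?_⟩
          · simp only [hσo X.2.1 hXa, hσo Y.2.1 hYa, hσo Z.2.1 hZa, hDneg, hωnr]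
            simp only [hωar, hωsubr, hωal, hωsl', hωsr', hωnr, hω0r, k2X, k2Y, k2Z, hDD,
              hDder true Y.2.1 hYa, hDder true Z.2.1 hZa, hDder true X.2.1 hXa, hDa₀,
              hW true Y.2.1 hYa, hW true Z.2.1 hZa, hW true X.2.1 hXa,
              sFF, sFT, sTF, sTT]
            linear_combination (-1 : K) * C1 + (-1 : K) * C2 + (-1 : K) * C3 + (1 : K) * X.2.2 * S1 + (-1 : K) * X.2.2 * S2 + (1 : K) * Y.2.2 * S3 + (-1 : K) * Y.2.2 * S4 + (1 : K) * Z.2.2 * S5 + (-1 : K) * Z.2.2 * S6 + (-2 : K) * X.2.2 * Y.2.2 * key1 (D Z.2.1) + (-2 : K) * Y.2.2 * Z.2.2 * key1 (D X.2.1) + (-2 : K) * Z.2.2 * X.2.2 * key1 (D Y.2.1) + (-6 : K) * X.2.2 * Y.2.2 * Z.2.2 * key1'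
          · simp only [hσo X.2.1 hXa, hσo Y.2.1 hYa, hσo Z.2.1 hZa, hDneg, hbnr]
            simp only [hbar, hbsubr, hbsr, hbnr, hb0r, hDadd, hDsub, hDsmul, hDneg, hD0, hDa₀,
              smul_zero, sFF, sFT, sTF, sTT]
            linear_combination (norm := module) J + ((-1 : K) * X.2.2) • D1 + ((-1 : K) * X.2.2) • A1 + ((-1 : K) * Y.2.2) • D2 + ((-1 : K) * Y.2.2) • A2 + ((-1 : K) * Z.2.2) • D3 + ((-1 : K) * Z.2.2) • A3 + ((-2 : K) * X.2.2 * Y.2.2) • hDD Z.2.1 + ((-2 : K) * X.2.2 * Y.2.2) • AAZ + ((-2 : K) * Y.2.2 * Z.2.2) • hDD X.2.1 + ((-2 : K) * Y.2.2 * Z.2.2) • AAX + ((-2 : K) * Z.2.2 * X.2.2) • hDD Y.2.1 + ((-2 : K) * Z.2.2 * X.2.2) • AAY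
          · simp
  · -- jacobi3
    intro h3 F hF
    rw [hmem] at hF
    obtain ⟨hFa, -⟩ := hF
    have J3 := hLie.jacobi3 h3 F.2.1 hFa
    have D1 := hDder true F.2.1 hFa F.2.1
    have A1 := hLie.antisymm false true (D F.2.1) (hDodd true F.2.1 hFa) F.2.1 hFa
    have AAF := hLie.antisymm false true a₀ ha₀even F.2.1 hFa
    have C1 := hclosed false true true (D F.2.1) (hDodd true F.2.1 hFa) F.2.1 hFa F.2.1 hFa
    have GF : brA a₀ F.2.1 ∈ subA true := by
      simpa using hLie.graded false true a₀ ha₀even F.2.1 hFa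
    have S2 := hskew true true (brA a₀ F.2.1) GF F.2.1 hFa
    have SDD := hskew false false (D F.2.1) (hDodd true F.2.1 hFa) (D F.2.1)
      (hDodd true F.2.1 hFa)
    have k2F := key2 true F.2.1 hFa
    simp only [sFF, sFT, sTF, sTT, one_smul, neg_smul, neg_neg] at J3 D1 A1 AAF C1 S2 SDD
    try dsimp only
    simp only [Prod.mk_eq_zero]
    refine ⟨?_, ?_, ?_⟩
    · simp only [hσo F.2.1 hFa, hDneg, hωnr]
      simp only [hωar, hωsubr, hωal, hωsl', hωsr', hωnr, hω0r, k2F, hDD,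
        hDder true F.2.1 hFa, hDa₀, hW true F.2.1 hFa, sFF, sFT, sTF, sTT]
      linear_combination C1 + F.2.2 * SDD - F.2.2 * S2 +
        (2 : K) * F.2.2 * F.2.2 * key1 (D F.2.1) + (2 : K) * F.2.2 * F.2.2 * F.2.2 * key1'
    · simp only [hσo F.2.1 hFa, hDneg, hbnr]
      simp only [hbar, hbsubr, hbsr, hbnr, hb0r, hDadd, hDsub, hDsmul, hDneg, hD0, hDa₀,
        smul_zero, sFF, sFT, sTF, sTT]
      linear_combination (norm := module) J3 + F.2.2 • D1 + F.2.2 • A1 +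
        ((2 : K) * F.2.2 * F.2.2) • hDD F.2.1 + ((2 : K) * F.2.2 * F.2.2) • AAF
    · simp
  · -- bracket with x
    intro g
    simp [hσ0, hD0, hDs0, hb0l, hω0l, hω0r]
  · -- bracket on A × A
    intro i a ha b
    refine Prod.ext ?_ (Prod.ext ?_ ?_) <;> simp
    rw [hωal, key2 i a ha b]
  · -- bracket x* x*
    refine Prod.ext ?_ (Prod.ext ?_ ?_) <;> simp [hσ0, hD0, hDs0, hb0l, hb0r, hω0l, hω0r]
  · -- bracket x* a
    intro a
    refine Prod.ext ?_ (Prod.ext ?_ ?_) <;>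
      simp [hσ0, hD0, hDs0, hb0l, hω0l, hω0r, key1 a]
  · -- bilin form
    refine ⟨?_, ?_, ?_, ?_⟩ <;> intros <;>
      simp [dblFormPlus, hωal, hωar, hωsl', hωsr', smul_eq_mul] <;> ring
  · -- superskew
    intro i j X hX Y hY
    rw [hmem] at hX hY
    obtain ⟨hXa, hX0⟩ := hX
    obtain ⟨hYa, hY0⟩ := hY
    have hsk := hskew i j X.2.1 hXa Y.2.1 hYa
    cases i with
    | false =>
      obtain ⟨hs, ht⟩ := hX0 rfl
      cases j with
      | false =>
        obtain ⟨hs', ht'⟩ := hY0 rfl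
        simp [dblFormPlus, hs, ht, hs', ht', ssign] at hsk ⊢
        linear_combination hsk
      | true =>
        simp [dblFormPlus, hs, ht, ssign] at hsk ⊢
        linear_combination hsk
    | true =>
      cases j with
      | false =>
        obtain ⟨hs', ht'⟩ := hY0 rfl
        simp [dblFormPlus, hs', ht', ssign] at hsk ⊢
        linear_combination hsk
      | true =>
        simp [dblFormPlus, ssign] at hsk ⊢
        linear_combination hsk
  · -- closedness
    intro i j k X hX Y hY Z hZ
    rw [hmem] at hX hY hZ
    obtain ⟨hXa, hX0⟩ := hX
    obtain ⟨hYa, hY0⟩ := hY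
    obtain ⟨hZa, hZ0⟩ := hZ
    have k2X := key2 i X.2.1 hXa
    have k2Y := key2 j Y.2.1 hYa
    have k2Z := key2 k Z.2.1 hZa
    cases i with
    | false =>
      cases j with
      | false =>
        cases k with
        | false =>
          obtain ⟨hsX, htX⟩ := hX0 rfl
          obtain ⟨hsY, htY⟩ := hY0 rfl
          obtain ⟨hsZ, htZ⟩ := hZ0 rfl
          simp only [dblFormPlus]
          try dsimp only
          simp only [hσe X.2.1 hXa, hσe Y.2.1 hYa, hσe Z.2.1 hZa, hDneg, hωnr]
          simp only [htX, htY, htZ]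
          simp only [hωar, hωsubr, hωal, hωsl', hωsr', hωnr, hω0r, k2X, k2Y, k2Z, sFF, sFT, sTF, sTT]
          have C0' := hclosed false false false X.2.1 hXa Y.2.1 hYa Z.2.1 hZa
          simp only [sFF, sFT, sTF, sTT] at C0'
          linear_combination C0'
        | true =>
          obtain ⟨hsX, htX⟩ := hX0 rfl
          obtain ⟨hsY, htY⟩ := hY0 rfl
          simp only [dblFormPlus]
          try dsimp only
          simp only [hσe X.2.1 hXa, hσe Y.2.1 hYa, hσo Z.2.1 hZa, hDneg, hωnr]
          simp only [htX, htY]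
          simp only [hωar, hωsubr, hωal, hωsl', hωsr', hωnr, hω0r, k2X, k2Y, k2Z, sFF, sFT, sTF, sTT]
          have C0' := hclosed false false true X.2.1 hXa Y.2.1 hYa Z.2.1 hZa
          have Sk3 := hskew true false (D X.2.1) (hDodd false X.2.1 hXa) Y.2.1 hYa
          simp only [sFF, sFT, sTF, sTT] at C0' Sk3
          linear_combination C0' + (1 : K) * Z.2.2 * Sk3
      | true =>
        cases k with
        | false =>
          obtain ⟨hsX, htX⟩ := hX0 rfl
          obtain ⟨hsZ, htZ⟩ := hZ0 rfl
          simp only [dblFormPlus]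
          try dsimp only
          simp only [hσe X.2.1 hXa, hσo Y.2.1 hYa, hσe Z.2.1 hZa, hDneg, hωnr]
          simp only [htX, htZ]
          simp only [hωar, hωsubr, hωal, hωsl', hωsr', hωnr, hω0r, k2X, k2Y, k2Z, sFF, sFT, sTF, sTT]
          have C0' := hclosed false true false X.2.1 hXa Y.2.1 hYa Z.2.1 hZa
          have Sk2 := hskew true false (D Z.2.1) (hDodd false Z.2.1 hZa) X.2.1 hXa
          simp only [sFF, sFT, sTF, sTT] at C0' Sk2
          linear_combination C0' + (1 : K) * Y.2.2 * Sk2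
        | true =>
          obtain ⟨hsX, htX⟩ := hX0 rfl
          simp only [dblFormPlus]
          try dsimp only
          simp only [hσe X.2.1 hXa, hσo Y.2.1 hYa, hσo Z.2.1 hZa, hDneg, hωnr]
          simp only [htX]
          simp only [hωar, hωsubr, hωal, hωsl', hωsr', hωnr, hω0r, k2X, k2Y, k2Z, sFF, sFT, sTF, sTT]
          have C0' := hclosed false true true X.2.1 hXa Y.2.1 hYa Z.2.1 hZa
          have Sk2 := hskew false false (D Z.2.1) (hDodd true Z.2.1 hZa) X.2.1 hXa
          have Sk3 := hskew true true (D X.2.1) (hDodd false X.2.1 hXa) Y.2.1 hYa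
          simp only [sFF, sFT, sTF, sTT] at C0' Sk2 Sk3
          linear_combination C0' + (1 : K) * Y.2.2 * Sk2 + (1 : K) * Z.2.2 * Sk3 + (2 : K) * Y.2.2 * Z.2.2 * key1 X.2.1
    | true =>
      cases j with
      | false =>
        cases k with
        | false =>
          obtain ⟨hsY, htY⟩ := hY0 rfl
          obtain ⟨hsZ, htZ⟩ := hZ0 rfl
          simp only [dblFormPlus]
          try dsimp only
          simp only [hσo X.2.1 hXa, hσe Y.2.1 hYa, hσe Z.2.1 hZa, hDneg, hωnr]
          simp only [htY, htZ]
          simp only [hωar, hωsubr, hωal, hωsl', hωsr', hωnr, hω0r, k2X, k2Y, k2Z, sFF, sFT, sTF, sTT]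
          have C0' := hclosed true false false X.2.1 hXa Y.2.1 hYa Z.2.1 hZa
          have Sk1 := hskew true false (D Y.2.1) (hDodd false Y.2.1 hYa) Z.2.1 hZa
          simp only [sFF, sFT, sTF, sTT] at C0' Sk1
          linear_combination C0' + (1 : K) * X.2.2 * Sk1
        | true =>
          obtain ⟨hsY, htY⟩ := hY0 rfl
          simp only [dblFormPlus]
          try dsimp only
          simp only [hσo X.2.1 hXa, hσe Y.2.1 hYa, hσo Z.2.1 hZa, hDneg, hωnr]
          simp only [htY]
          simp only [hωar, hωsubr, hωal, hωsl', hωsr', hωnr, hω0r, k2X, k2Y, k2Z, sFF, sFT, sTF, sTT]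
          have C0' := hclosed true false true X.2.1 hXa Y.2.1 hYa Z.2.1 hZa
          have Sk1 := hskew true true (D Y.2.1) (hDodd false Y.2.1 hYa) Z.2.1 hZa
          have Sk3 := hskew false false (D X.2.1) (hDodd true X.2.1 hXa) Y.2.1 hYa
          simp only [sFF, sFT, sTF, sTT] at C0' Sk1 Sk3
          linear_combination C0' + (1 : K) * X.2.2 * Sk1 + (1 : K) * Z.2.2 * Sk3 + (2 : K) * Z.2.2 * X.2.2 * key1 Y.2.1
      | true =>
        cases k with
        | false =>
          obtain ⟨hsZ, htZ⟩ := hZ0 rfl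
          simp only [dblFormPlus]
          try dsimp only
          simp only [hσo X.2.1 hXa, hσo Y.2.1 hYa, hσe Z.2.1 hZa, hDneg, hωnr]
          simp only [htZ]
          simp only [hωar, hωsubr, hωal, hωsl', hωsr', hωnr, hω0r, k2X, k2Y, k2Z, sFF, sFT, sTF, sTT]
          have C0' := hclosed true true false X.2.1 hXa Y.2.1 hYa Z.2.1 hZa
          have Sk1 := hskew false false (D Y.2.1) (hDodd true Y.2.1 hYa) Z.2.1 hZa
          have Sk2 := hskew true true (D Z.2.1) (hDodd false Z.2.1 hZa) X.2.1 hXa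
          simp only [sFF, sFT, sTF, sTT] at C0' Sk1 Sk2
          linear_combination C0' + (1 : K) * X.2.2 * Sk1 + (1 : K) * Y.2.2 * Sk2 + (2 : K) * X.2.2 * Y.2.2 * key1 Z.2.1
        | true =>
          simp only [dblFormPlus]
          try dsimp only
          simp only [hσo X.2.1 hXa, hσo Y.2.1 hYa, hσo Z.2.1 hZa, hDneg, hωnr]
          simp only [hωar, hωsubr, hωal, hωsl', hωsr', hωnr, hω0r, k2X, k2Y, k2Z, sFF, sFT, sTF, sTT]
          have C0' := hclosed true true true X.2.1 hXa Y.2.1 hYa Z.2.1 hZa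
          have Sk1 := hskew false true (D Y.2.1) (hDodd true Y.2.1 hYa) Z.2.1 hZa
          have Sk2 := hskew false true (D Z.2.1) (hDodd true Z.2.1 hZa) X.2.1 hXa
          have Sk3 := hskew false true (D X.2.1) (hDodd true X.2.1 hXa) Y.2.1 hYa
          simp only [sFF, sFT, sTF, sTT] at C0' Sk1 Sk2 Sk3
          linear_combination C0' + (-1 : K) * X.2.2 * Sk1 + (-1 : K) * Y.2.2 * Sk2 + (-1 : K) * Z.2.2 * Sk3 + (-2 : K) * X.2.2 * Y.2.2 * key1 Z.2.1 + (-2 : K) * Y.2.2 * Z.2.2 * key1 X.2.1 + (-2 : K) * Z.2.2 * X.2.2 * key1 Y.2.1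
  · -- nondeg
    intro X hX
    have h1 := hX (1, 0, 0)
    have h2 := hX (0, 0, 1)
    have ha : X.2.1 = 0 := by
      apply hnondeg
      intro y
      have := hX (0, y, 0)
      simpa [dblFormPlus, hω0r] using this
    simp [dblFormPlus, hω0r] at h1 h2
    exact Prod.ext h2 (Prod.ext ha h1)
  · -- even form
    intro X Y h
    rcases h with ⟨hX, hY⟩ | ⟨hX, hY⟩ <;> rw [hmem] at hX hY
    · obtain ⟨hs, ht⟩ := hX.2 rfl
      have h0 : ωA X.2.1 Y.2.1 = 0 := hEven _ _ (Or.inl ⟨hX.1, hY.1⟩)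
      simp [dblFormPlus, hs, ht, h0]
    · obtain ⟨hs, ht⟩ := hY.2 rfl
      have h0 : ωA X.2.1 Y.2.1 = 0 := hEven _ _ (Or.inr ⟨hX.1, hY.1⟩)
      simp [dblFormPlus, hs, ht, h0]
end
end
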